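/- arXiv:2004.10163 — 6 statements merged into one kernel-verified Lean document; each statement's English description precedes it below -/
import Mathlib

section
/- Let β be the Kertz constant. There exists a strictly decreasing, continuously differentiable function y : [0,1] → [0,1] with y(0) = 1 and y(1) = 0 satisfying both: (i) y'(t) = y(t)·(log y(t) − 1) − (1/β − 1) for all t ∈ [0,1] (with y log y interpreted as 0 when y = 0), and (ii) exp(∫₀ᵗ log y(s) ds) = −β·y'(t) for all t ∈ [0,1). -/
open MeasureTheory

noncomputable section

/-- **Solution of the Kertz differential equation** (Lemma 6 of the paper): for the Kertz
constant `β` there is a strictly decreasing, continuously differentiable `y : [0,1] → [0,1]`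
with `y(0) = 1`, `y(1) = 0`, satisfying `y' = y(log y − 1) − (1/β − 1)` on `[0,1]` and
`exp(∫₀ᵗ log y(s) ds) = −β·y'(t)` on `[0,1)`. -/
theorem kertz_ode_solution
    (β : ℝ) (hβ : β ∈ Set.Ioo (0:ℝ) 1)
    (hβeq : (∫ y in (0:ℝ)..1, ((1 / β - 1) - y * (Real.log y - 1))⁻¹) = 1) :
    ∃ y y' : ℝ → ℝ,
      StrictAntiOn y (Set.Icc 0 1) ∧
      (∀ t ∈ Set.Icc (0:ℝ) 1, y t ∈ Set.Icc (0:ℝ) 1) ∧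
      (∀ t ∈ Set.Icc (0:ℝ) 1, HasDerivWithinAt y (y' t) (Set.Icc 0 1) t) ∧
      ContinuousOn y' (Set.Icc 0 1) ∧
      y 0 = 1 ∧ y 1 = 0 ∧
      (∀ t ∈ Set.Icc (0:ℝ) 1, y' t = y t * (Real.log (y t) - 1) - (1 / β - 1)) ∧
      (∀ t ∈ Set.Ico (0:ℝ) 1,
        Real.exp (∫ s in (0:ℝ)..t, Real.log (y s)) = -β * y' t) := by
  obtain ⟨hβ0, hβ1⟩ := hβ
  set c : ℝ := 1 / β - 1 with hc_def
  have hc : 0 < c := by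
    have : 1 < 1 / β := (one_lt_one_div hβ0 hβ1)
    simp only [hc_def]; linarith
  set f : ℝ → ℝ := fun u => c - u * (Real.log u - 1) with hf_def
  have hfc : Continuous f := by
    have h1 : Continuous fun u : ℝ => u * (Real.log u - 1) := by
      have := Real.continuous_mul_log.sub continuous_id
      exact this.congr fun u => by simp only [Pi.sub_apply, id]; ring
    exact continuous_const.sub h1
  have hfpos : ∀ u ∈ Set.Icc (0:ℝ) 1, 0 < f u := by
    intro u hu
    have h1 : u * Real.log u ≤ 0 :=
      mul_nonpos_of_nonneg_of_nonpos hu.1 (Real.log_nonpos hu.1 hu.2)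
    have : f u = c - u * Real.log u + u := by simp [hf_def]; ring
    rw [this]; linarith [hu.1]
  set p : ℝ → ℝ := fun v => max 0 (min 1 v) with hp_def
  have hpmem : ∀ v : ℝ, p v ∈ Set.Icc (0:ℝ) 1 := by
    intro v
    refine ⟨le_max_left _ _, max_le zero_le_one (min_le_left _ _)⟩
  have hpid : ∀ v ∈ Set.Icc (0:ℝ) 1, p v = v := by
    intro v hv
    simp [hp_def, min_eq_right hv.2, max_eq_right hv.1]
  have hpc : Continuous p := continuous_const.max (continuous_const.min continuous_id)
  set g : ℝ → ℝ := fun v => (f (p v))⁻¹ with hg_def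
  have hgpos : ∀ v : ℝ, 0 < g v := fun v => inv_pos.2 (hfpos _ (hpmem v))
  have hgc : Continuous g := (hfc.comp hpc).inv₀ fun v => (hfpos _ (hpmem v)).ne'
  set T : ℝ → ℝ := fun u => ∫ v in u..(1:ℝ), g v with hT_def
  have hTd : ∀ a : ℝ, HasDerivAt T (-(g a)) a := by
    intro a
    have h1 : HasDerivAt (fun u => ∫ v in (1:ℝ)..u, g v) (g a) a :=
      intervalIntegral.integral_hasDerivAt_right (hgc.intervalIntegrable _ _)
        (hgc.stronglyMeasurableAtFilter _ _) hgc.continuousAt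
    have h2 := h1.neg
    have heq : T = fun u => -∫ v in (1:ℝ)..u, g v := by
      funext u
      show (∫ v in u..(1:ℝ), g v) = -∫ v in (1:ℝ)..u, g v
      rw [intervalIntegral.integral_symm u 1, neg_neg]
    rw [heq]; exact h2
  have hTanti : StrictAnti T := by
    apply strictAnti_of_deriv_neg
    intro x
    rw [(hTd x).deriv]
    exact neg_neg_iff_pos.2 (hgpos x)
  have hTc : Continuous T := by
    rw [continuous_iff_continuousAt]; exact fun x => (hTd x).continuousAt
  have hT1 : T 1 = 0 := intervalIntegral.integral_same
  have hT0 : T 0 = 1 := by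
    rw [← hβeq, hT_def]
    apply intervalIntegral.integral_congr
    intro v hv
    rw [Set.uIcc_of_le (zero_le_one)] at hv
    simp only [hg_def, hf_def, hpid v hv]
  have hT2 : T 2 < 0 := by rw [← hT1]; exact hTanti one_lt_two
  have hTm1 : 1 < T (-1) := by
    have h := hTanti (show (-1:ℝ) < 0 by norm_num)
    rw [hT0] at h; exact h
  -- surjectivity of T from [-1,2] onto [T 2, T (-1)]
  have hsurj : Set.Icc (T 2) (T (-1)) ⊆ T '' Set.Icc (-1:ℝ) 2 :=
    intermediate_value_Icc' (by norm_num) hTc.continuousOn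
  set y : ℝ → ℝ := Function.invFun T with hy_def
  have hyT : ∀ u : ℝ, y (T u) = u := fun u => Function.leftInverse_invFun hTanti.injective u
  have hTy : ∀ t ∈ Set.Icc (T 2) (T (-1)), T (y t) = t := by
    intro t ht
    obtain ⟨u, _, hu⟩ := hsurj ht
    exact Function.invFun_eq ⟨u, hu⟩
  have hyanti : StrictAntiOn y (Set.Icc (T 2) (T (-1))) := by
    intro s hs t ht hst
    by_contra h
    push_neg at h
    rcases eq_or_lt_of_le h with h1 | h1
    · rw [← hTy s hs, ← hTy t ht, h1] at hst; exact lt_irrefl _ hst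
    · have := hTanti h1
      rw [hTy s hs, hTy t ht] at this
      exact absurd hst (not_lt.2 this.le)
  have hIccSub : Set.Icc (0:ℝ) 1 ⊆ Set.Ioo (T 2) (T (-1)) := fun t ht =>
    ⟨lt_of_lt_of_le hT2 ht.1, lt_of_le_of_lt ht.2 hTm1⟩
  -- membership of y t
  have hymem01 : ∀ t ∈ Set.Icc (0:ℝ) 1, y t ∈ Set.Icc (0:ℝ) 1 := by
    intro t ht
    have hTyt := hTy t (Set.Ioo_subset_Icc_self (hIccSub ht))
    constructor
    · by_contra h
      push_neg at h
      have := hTanti h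
      rw [hTyt, hT0] at this
      exact absurd ht.2 (not_le.2 this)
    · by_contra h
      push_neg at h
      have := hTanti h
      rw [hTyt, hT1] at this
      exact absurd ht.1 (not_le.2 this)
  have hymemI : ∀ t ∈ Set.Ioo (T 2) (T (-1)), y t ∈ Set.Ioo (-1:ℝ) 2 := by
    intro t ht
    have hTyt := hTy t (Set.Ioo_subset_Icc_self ht)
    constructor
    · by_contra h
      push_neg at h
      have := hTanti.antitone h
      rw [hTyt] at this
      exact absurd ht.2 (not_lt.2 this)
    · by_contra h
      push_neg at h
      have := hTanti.antitone h
      rw [hTyt] at this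
      exact absurd ht.1 (not_lt.2 this)
  have hycont : ∀ t ∈ Set.Ioo (T 2) (T (-1)), ContinuousAt y t := by
    intro t ht
    have hz : StrictMonoOn (fun s => -(y s)) (Set.Icc (T 2) (T (-1))) := by
      intro a ha b hb hab
      simpa using hyanti ha hb hab
    have hnbhd : Set.Icc (T 2) (T (-1)) ∈ nhds t := Icc_mem_nhds ht.1 ht.2
    have himg : (fun s => -(y s)) '' Set.Icc (T 2) (T (-1)) ∈ nhds (-(y t)) := by
      have hsub : Set.Icc (-2:ℝ) 1 ⊆ (fun s => -(y s)) '' Set.Icc (T 2) (T (-1)) := by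
        intro w hw
        refine ⟨T (-w), ⟨hTanti.antitone (by linarith [hw.1] : -w ≤ 2),
          hTanti.antitone (by linarith [hw.2] : (-1:ℝ) ≤ -w)⟩, ?_⟩
        show -(y (T (-w))) = w
        rw [hyT]; ring
      refine Filter.mem_of_superset ?_ hsub
      apply Icc_mem_nhds
      · have := (hymemI t ht).2; linarith
      · have := (hymemI t ht).1; linarith
    have hcz := hz.continuousAt_of_image_mem_nhds hnbhd himg
    have hyeq : y = fun s => -(-(y s)) := by funext s; ring
    rw [hyeq]
    exact hcz.neg
  set yd : ℝ → ℝ := fun t => y t * (Real.log (y t) - 1) - (1/β - 1) with hyd_def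
  have hydf : ∀ t ∈ Set.Icc (0:ℝ) 1, yd t = -(f (y t)) := by
    intro t ht
    simp only [hyd_def, hf_def, hc_def]
    ring
  have hyderiv : ∀ t ∈ Set.Icc (0:ℝ) 1, HasDerivAt y (yd t) t := by
    intro t ht
    have ht' := hIccSub ht
    have hfg : ∀ᶠ x in nhds t, T (y x) = x :=
      Filter.mem_of_superset (Icc_mem_nhds ht'.1 ht'.2) fun x hx => hTy x hx
    have hgy := hgpos (y t)
    have hd := HasDerivAt.of_local_left_inverse (hycont t ht') (hTd (y t))
      (neg_ne_zero.2 hgy.ne') hfg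
    have heq : (-(g (y t)))⁻¹ = yd t := by
      rw [hydf t ht, inv_neg]
      simp only [hg_def]
      rw [hpid _ (hymem01 t ht), inv_inv]
    rw [heq] at hd
    exact hd
  have hyc : ContinuousOn y (Set.Icc (0:ℝ) 1) := fun t ht =>
    (hycont t (hIccSub ht)).continuousWithinAt
  have hydc : ContinuousOn yd (Set.Icc (0:ℝ) 1) := by
    have h2 : Continuous fun u : ℝ => u * (Real.log u - 1) - (1/β - 1) := by
      have := Real.continuous_mul_log.sub continuous_id
      have h3 : Continuous fun u : ℝ => u * (Real.log u - 1) := by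
        exact this.congr fun u => by simp only [Pi.sub_apply, id]; ring
      exact h3.sub continuous_const
    exact h2.comp_continuousOn hyc
  have hy0 : y 0 = 1 := by
    apply hTanti.injective
    rw [hTy 0 (Set.Ioo_subset_Icc_self (hIccSub ⟨le_refl 0, zero_le_one⟩)), hT1]
  have hy1 : y 1 = 0 := by
    apply hTanti.injective
    rw [hTy 1 (Set.Ioo_subset_Icc_self (hIccSub ⟨zero_le_one, le_refl 1⟩)), hT0]
  have hyantiOn : StrictAntiOn y (Set.Icc (0:ℝ) 1) := fun a ha b hb hab =>
    hyanti (Set.Ioo_subset_Icc_self (hIccSub ha)) (Set.Ioo_subset_Icc_self (hIccSub hb)) hab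
  refine ⟨y, yd, hyantiOn, hymem01, fun t ht => (hyderiv t ht).hasDerivWithinAt, hydc,
    hy0, hy1, fun t ht => rfl, ?_⟩
  intro t0 ht0
  have hypos : ∀ x ∈ Set.Ico (T 2) (1:ℝ), 0 < y x := by
    intro x hx
    by_contra h
    push_neg at h
    have h2 := hTanti.antitone h
    rw [hTy x ⟨hx.1, (lt_trans hx.2 hTm1).le⟩, hT0] at h2
    exact absurd hx.2 (not_lt.2 h2)
  set U : Set ℝ := Set.Ioo (T 2) (1:ℝ) with hU_def
  have hUopen : IsOpen U := isOpen_Ioo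
  have hUsub : U ⊆ Set.Ioo (T 2) (T (-1)) := fun x hx => ⟨hx.1, lt_trans hx.2 hTm1⟩
  have hlogcont : ∀ x ∈ U, ContinuousAt (fun s => Real.log (y s)) x := by
    intro x hx
    exact (Real.continuousAt_log (hypos x ⟨hx.1.le, hx.2⟩).ne').comp (hycont x (hUsub hx))
  have hlogcontOn : ContinuousOn (fun s => Real.log (y s)) U :=
    continuousOn_of_forall_continuousAt hlogcont
  have hmemU : Set.Icc (0:ℝ) t0 ⊆ U := fun x hx =>
    ⟨lt_of_lt_of_le hT2 hx.1, lt_of_le_of_lt hx.2 ht0.2⟩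
  set G : ℝ → ℝ := fun t => ∫ s in (0:ℝ)..t, Real.log (y s) with hG_def
  have hGd : ∀ x ∈ Set.Icc (0:ℝ) t0, HasDerivAt G (Real.log (y x)) x := by
    intro x hx
    apply intervalIntegral.integral_hasDerivAt_right
    · apply ContinuousOn.intervalIntegrable
      apply hlogcontOn.mono
      rw [Set.uIcc_of_le hx.1]
      exact fun z hz => hmemU ⟨hz.1, le_trans hz.2 hx.2⟩
    · exact ContinuousOn.stronglyMeasurableAtFilter hUopen hlogcontOn x (hmemU hx)
    · exact hlogcont x (hmemU hx)
  set H : ℝ → ℝ := fun t => Real.log (β * f (y t)) with hH_def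
  have hfd : ∀ u : ℝ, u ≠ 0 → HasDerivAt f (-(Real.log u)) u := by
    intro u hu
    have h1 := (Real.hasDerivAt_mul_log hu).sub (hasDerivAt_id u)
    have h2 := h1.const_sub c
    have heq : f = (fun x : ℝ => c - (x * Real.log x - id x)) := by
      funext w; simp only [hf_def, id]; ring
    rw [heq]
    exact h2.congr_deriv (by ring)
  have hHd : ∀ x ∈ Set.Icc (0:ℝ) t0, HasDerivAt H (Real.log (y x)) x := by
    intro x hx
    have hx1 : x ∈ Set.Icc (0:ℝ) 1 := ⟨hx.1, le_trans hx.2 ht0.2.le⟩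
    have hyx : 0 < y x := hypos x ⟨le_trans hT2.le hx.1, lt_of_le_of_lt hx.2 ht0.2⟩
    have hfyx : 0 < f (y x) := hfpos _ (hymem01 x hx1)
    have hd1 : HasDerivAt (fun t => β * f (y t)) (β * (-(Real.log (y x)) * yd x)) x :=
      ((hfd (y x) hyx.ne').comp x (hyderiv x hx1)).const_mul β
    have hd2 := hd1.log (by positivity)
    convert hd2 using 1
    rw [hydf x hx1]
    field_simp
  have hG0 : G 0 = 0 := intervalIntegral.integral_same
  have hH0 : H 0 = 0 := by
    have hf1 : f 1 = c + 1 := by simp [hf_def]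
    have : β * f (y 0) = 1 := by
      rw [hy0, hf1, hc_def]
      field_simp
      ring
    simp only [hH_def, this, Real.log_one]
  have key : ∀ x ∈ Set.Icc (0:ℝ) t0, G x - H x = G 0 - H 0 := by
    apply constant_of_has_deriv_right_zero
    · intro x hx
      exact ((hGd x hx).sub (hHd x hx)).continuousAt.continuousWithinAt
    · intro x hx
      have hx' : x ∈ Set.Icc (0:ℝ) t0 := ⟨hx.1, hx.2.le⟩
      have := ((hGd x hx').sub (hHd x hx')).hasDerivWithinAt (s := Set.Ici x)
      rw [sub_self] at this; exact this
  have hGt0 : G t0 = H t0 := by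
    have := key t0 ⟨ht0.1, le_refl t0⟩
    rw [hG0, hH0] at this
    linarith
  have ht01 : t0 ∈ Set.Icc (0:ℝ) 1 := ⟨ht0.1, ht0.2.le⟩
  have hfyt0 : 0 < f (y t0) := hfpos _ (hymem01 t0 ht01)
  show Real.exp (G t0) = -β * yd t0
  rw [hGt0, hH_def]
  simp only []
  rw [Real.exp_log (by positivity), hydf t0 ht01]
  ring
end
end

section
/- Let X_1, …, X_n be independent, nonnegative, integrable random variables forming an m-frequent collection, and let S ⊆ {1,…,n} with |S| ≥ n − k where k ≤ m. Then E[max_{i∈S} X_i] ≥ (1 − k/m)·E[max_{1≤i≤n} X_i]. -/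
open MeasureTheory ProbabilityTheory

noncomputable section

/-- **The frequency coupling lemma** (Lemma 8 of the paper): if `X_1, …, X_n` is an
`m`-frequent collection of independent, nonnegative, integrable random variables and
`S ⊆ {1,…,n}` has `|S| ≥ n − k` with `k ≤ m`, then
`E[max_{i ∈ S} X_i] ≥ (1 − k/m)·E[max_i X_i]`. -/
theorem frequent_coupling
    {Ω : Type} [MeasurableSpace Ω] (μ : Measure Ω) [IsProbabilityMeasure μ]
    (n m k : ℕ) (hn : 0 < n) (hm : 0 < m) (hkm : k ≤ m)
    (X : Fin n → Ω → ℝ)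
    (hmeas : ∀ i, Measurable (X i))
    (hnn : ∀ i ω, 0 ≤ X i ω)
    (hint : ∀ i, Integrable (X i) μ)
    (hindep : iIndepFun X μ)
    (hfreq : ∀ i : Fin n, m ≤ Set.ncard {j : Fin n | IdentDistrib (X j) (X i) μ μ})
    (S : Finset (Fin n)) (hS : n - k ≤ S.card) :
    (1 - (k : ℝ) / m) * (∫ ω, (⨆ i, X i ω) ∂μ) ≤ ∫ ω, (⨆ i ∈ S, X i ω) ∂μ := by
  classical
  haveI : Nonempty (Fin n) := ⟨⟨0, hn⟩⟩
  have hbdd : ∀ f : Fin n → ℝ, BddAbove (Set.range f) := fun f =>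
    (Set.finite_range f).bddAbove
  -- the group (as a Finset) of distribution-preserving permutations
  set G : Finset (Equiv.Perm (Fin n)) :=
    Finset.univ.filter (fun π => ∀ i, IdentDistrib (X (π i)) (X i) μ μ) with hGdef
  have hmemG : ∀ {π : Equiv.Perm (Fin n)},
      π ∈ G ↔ ∀ i, IdentDistrib (X (π i)) (X i) μ μ := by
    intro π; simp [hGdef]
  have honeG : (1 : Equiv.Perm (Fin n)) ∈ G :=
    hmemG.2 fun i => IdentDistrib.refl (hmeas i).aemeasurable
  have hGpos : 0 < G.card := Finset.card_pos.2 ⟨1, honeG⟩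
  -- the joint law of any reindexed vector is the product of the marginals
  have hpi : ∀ π : Equiv.Perm (Fin n),
      Measure.map (fun ω i => X (π i) ω) μ
        = Measure.pi (fun i => Measure.map (X (π i)) μ) := by
    intro π
    haveI : ∀ i : Fin n, IsProbabilityMeasure (Measure.map (X (π i)) μ) := fun i =>
      Measure.isProbabilityMeasure_map (hmeas _).aemeasurable
    refine (Measure.pi_eq fun s hs => ?_).symm
    rw [Measure.map_apply (measurable_pi_lambda _ fun i => hmeas _)
      (MeasurableSet.univ_pi hs)]
    have hpre : (fun ω i => X (π i) ω) ⁻¹' Set.pi Set.univ s = ⋂ i, X (π i) ⁻¹' s i := by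
      ext ω; simp [Set.mem_pi]
    have h1 : (⋂ i, X (π i) ⁻¹' s i) = ⋂ j, X j ⁻¹' s (π.symm j) := by
      rw [← π.surjective.iInter_comp (g := fun j => X j ⁻¹' s (π.symm j))]
      simp
    have h2 := hindep.measure_inter_preimage_eq_mul (S := Finset.univ)
      (sets := fun j => s (π.symm j)) (fun j _ => hs _)
    have h2' : μ (⋂ j, X j ⁻¹' s (π.symm j)) = ∏ j, μ (X j ⁻¹' s (π.symm j)) := by
      rw [← h2]
      congr 1
      simp
    rw [hpre, h1, h2', ← Equiv.prod_comp π (fun j => μ (X j ⁻¹' s (π.symm j)))]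
    refine Finset.prod_congr rfl fun i _ => ?_
    rw [Equiv.symm_apply_apply, Measure.map_apply (hmeas _) (hs i)]
  -- hence any π ∈ G gives an identically distributed vector
  have hident : ∀ π ∈ G,
      IdentDistrib (fun ω i => X (π i) ω) (fun ω i => X i ω) μ μ := by
    intro π hπ
    rw [hmemG] at hπ
    refine ⟨(measurable_pi_lambda _ fun i => hmeas _).aemeasurable,
      (measurable_pi_lambda _ fun i => hmeas _).aemeasurable, ?_⟩
    have h1 := hpi 1
    simp only [Equiv.Perm.one_apply] at h1
    rw [hpi π, h1]
    exact congrArg Measure.pi (funext fun i => (hπ i).map_eq)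
  -- the truncated sup functions
  set Z : Equiv.Perm (Fin n) → Ω → ℝ :=
    fun π ω => ⨆ i, if i ∈ S then X (π i) ω else 0 with hZdef
  set Z0 : Ω → ℝ := fun ω => ⨆ i, if i ∈ S then X i ω else 0 with hZ0def
  have hg : Measurable (fun v : Fin n → ℝ => ⨆ i, if i ∈ S then v i else 0) := by
    apply Measurable.iSup
    intro i
    split_ifs
    · exact measurable_pi_apply i
    · exact measurable_const
  have hZident : ∀ π ∈ G, IdentDistrib (Z π) Z0 μ μ := by
    intro π hπ
    exact (hident π hπ).comp hg
  -- measurability and integrability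
  have hZmeas : ∀ π : Equiv.Perm (Fin n), Measurable (Z π) := by
    intro π
    apply Measurable.iSup
    intro i
    split_ifs
    · exact hmeas _
    · exact measurable_const
  have hsum_int : Integrable (fun ω => ∑ i, X i ω) μ :=
    integrable_finset_sum _ fun i _ => hint i
  have hZle : ∀ π ω, Z π ω ≤ ∑ i, X i ω := by
    intro π ω
    refine ciSup_le fun i => ?_
    split_ifs
    · exact Finset.single_le_sum (fun j _ => hnn j ω) (Finset.mem_univ (π i))
    · exact Finset.sum_nonneg fun j _ => hnn j ω
  have hZnn : ∀ π ω, 0 ≤ Z π ω := by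
    intro π ω
    refine le_trans ?_ (le_ciSup (hbdd _) (Classical.arbitrary (Fin n)))
    split_ifs
    · exact hnn _ ω
    · exact le_rfl
  have hZint : ∀ π : Equiv.Perm (Fin n), Integrable (Z π) μ := by
    intro π
    refine Integrable.mono' hsum_int (hZmeas π).aestronglyMeasurable (ae_of_all _ fun ω => ?_)
    rw [Real.norm_eq_abs, abs_of_nonneg (hZnn π ω)]
    exact hZle π ω
  set Y : Ω → ℝ := fun ω => ⨆ i, X i ω with hYdef
  have hYmeas : Measurable Y := Measurable.iSup fun i => hmeas i
  have hYint : Integrable Y μ := by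
    refine Integrable.mono' hsum_int hYmeas.aestronglyMeasurable (ae_of_all _ fun ω => ?_)
    have h0 : 0 ≤ Y ω := by
      simp only [hYdef]
      exact le_trans (hnn (Classical.arbitrary (Fin n)) ω)
        (le_ciSup (hbdd fun i => X i ω) (Classical.arbitrary (Fin n)))
    rw [Real.norm_eq_abs, abs_of_nonneg h0]
    exact ciSup_le fun i => Finset.single_le_sum (fun j _ => hnn j ω) (Finset.mem_univ i)
  -- the counting lemma
  have hcount : ∀ i0 : Fin n,
      (m - k) * G.card ≤ m * (G.filter fun π => π.symm i0 ∈ S).card := by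
    intro i0
    set C : Finset (Fin n) := Finset.univ.filter
      (fun j => IdentDistrib (X j) (X i0) μ μ) with hCdef
    have hmemC : ∀ {j}, j ∈ C ↔ IdentDistrib (X j) (X i0) μ μ := by
      intro j; simp [hCdef]
    have hi0C : i0 ∈ C := hmemC.2 (IdentDistrib.refl (hmeas i0).aemeasurable)
    set fib : Fin n → Finset (Equiv.Perm (Fin n)) :=
      fun j => G.filter fun π => π.symm i0 = j with hfibdef
    -- multiplying by a swap of two equivalent indices stays in G
    have hswap_mem : ∀ {j j' : Fin n}, j ∈ C → j' ∈ C → ∀ {π : Equiv.Perm (Fin n)},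
        π ∈ G → π * Equiv.swap j j' ∈ G := by
      intro j j' hj hj' π hπ
      rw [hmemG] at hπ ⊢
      intro i
      have hsw : IdentDistrib (X (Equiv.swap j j' i)) (X i) μ μ := by
        rcases eq_or_ne i j with rfl | hij
        · rw [Equiv.swap_apply_left]
          exact (hmemC.1 hj').trans (hmemC.1 hj).symm
        rcases eq_or_ne i j' with rfl | hij'
        · rw [Equiv.swap_apply_right]
          exact (hmemC.1 hj).trans (hmemC.1 hj').symm
        · rw [Equiv.swap_apply_of_ne_of_ne hij hij']
          exact IdentDistrib.refl (hmeas i).aemeasurable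
      have : (π * Equiv.swap j j') i = π (Equiv.swap j j' i) := rfl
      rw [this]
      exact (hπ _).trans hsw
    have hsymm_mul : ∀ (π : Equiv.Perm (Fin n)) (j j' : Fin n),
        (π * Equiv.swap j j').symm i0 = Equiv.swap j j' (π.symm i0) := by
      intro π j j'
      simp [Equiv.Perm.mul_def, Equiv.symm_trans_apply, Equiv.symm_swap]
    -- all fibers over C have the same cardinality
    have hfib_card : ∀ j ∈ C, (fib j).card = (fib i0).card := by
      intro j hj
      refine Finset.card_bij' (fun π _ => π * Equiv.swap j i0)
        (fun π _ => π * Equiv.swap j i0) ?_ ?_ ?_ ?_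
      · intro π hπ
        simp only [hfibdef, Finset.mem_filter] at hπ ⊢
        refine ⟨hswap_mem hj hi0C hπ.1, ?_⟩
        rw [hsymm_mul, hπ.2, Equiv.swap_apply_left]
      · intro π hπ
        simp only [hfibdef, Finset.mem_filter] at hπ ⊢
        refine ⟨hswap_mem hj hi0C hπ.1, ?_⟩
        rw [hsymm_mul, hπ.2, Equiv.swap_apply_right]
      · intro π _
        show π * Equiv.swap j i0 * Equiv.swap j i0 = π
        rw [mul_assoc, Equiv.swap_mul_self, mul_one]
      · intro π _
        show π * Equiv.swap j i0 * Equiv.swap j i0 = π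
        rw [mul_assoc, Equiv.swap_mul_self, mul_one]
    have hmapC : ∀ π ∈ G, π.symm i0 ∈ C := by
      intro π hπ
      have := (hmemG.1 hπ) (π.symm i0)
      rw [Equiv.apply_symm_apply] at this
      exact hmemC.2 this.symm
    have hGcard : G.card = ∑ j ∈ C, (fib j).card :=
      Finset.card_eq_sum_card_fiberwise hmapC
    have hGScard : (G.filter fun π => π.symm i0 ∈ S).card
        = ∑ j ∈ C.filter (· ∈ S), (fib j).card := by
      have h1 : (G.filter fun π => π.symm i0 ∈ S).card
          = ∑ j ∈ C.filter (· ∈ S),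
            ((G.filter fun π => π.symm i0 ∈ S).filter fun π => π.symm i0 = j).card := by
        refine Finset.card_eq_sum_card_fiberwise fun π hπ => ?_
        exact Finset.mem_filter.2 ⟨hmapC π (Finset.mem_filter.1 hπ).1,
          (Finset.mem_filter.1 hπ).2⟩
      rw [h1]
      refine Finset.sum_congr rfl fun j hj => ?_
      have hjS : j ∈ S := (Finset.mem_filter.1 hj).2
      congr 1
      ext π
      constructor
      · intro hπ
        have h1' := Finset.mem_filter.1 hπ
        have h2' := Finset.mem_filter.1 h1'.1
        exact Finset.mem_filter.2 ⟨h2'.1, h1'.2⟩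
      · intro hπ
        have h1' := Finset.mem_filter.1 hπ
        exact Finset.mem_filter.2 ⟨Finset.mem_filter.2 ⟨h1'.1, h1'.2 ▸ hjS⟩, h1'.2⟩
    set c := (fib i0).card with hcdef
    have hG_eq : G.card = C.card * c := by
      rw [hGcard, Finset.sum_congr rfl hfib_card, Finset.sum_const, smul_eq_mul]
    have hGS_eq : (G.filter fun π => π.symm i0 ∈ S).card = (C.filter (· ∈ S)).card * c := by
      rw [hGScard, Finset.sum_congr rfl (fun j hj => hfib_card j (Finset.mem_filter.1 hj).1),
        Finset.sum_const, smul_eq_mul]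
    set s1 := (C.filter (· ∈ S)).card with hs1def
    set t1 := (C.filter (· ∉ S)).card with ht1def
    have hst : s1 + t1 = C.card := Finset.card_filter_add_card_filter_not _
    have ht1 : t1 ≤ k := by
      have h1 : C.filter (· ∉ S) ⊆ Finset.univ.filter (· ∉ S) :=
        Finset.filter_subset_filter _ (Finset.subset_univ C)
      have h2 : (Finset.univ.filter (· ∉ S) : Finset (Fin n)) = Sᶜ := by
        ext j; simp
      have h3 : t1 ≤ Sᶜ.card := by
        rw [← h2]; exact Finset.card_le_card h1
      rw [Finset.card_compl, Fintype.card_fin] at h3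
      omega
    have hmC : m ≤ C.card := by
      have h1 := hfreq i0
      have h2 : {j : Fin n | IdentDistrib (X j) (X i0) μ μ} = ↑C := by
        ext j; simp [hCdef]
      rwa [h2, Set.ncard_coe_finset] at h1
    have hmC' : m ≤ s1 + t1 := by omega
    have key : (m - k) * (s1 + t1) ≤ m * s1 := by
      have h1 : m * t1 ≤ k * (s1 + t1) :=
        calc m * t1 ≤ m * k := Nat.mul_le_mul_left m ht1
          _ = k * m := Nat.mul_comm m k
          _ ≤ k * (s1 + t1) := Nat.mul_le_mul_left k hmC'
      calc (m - k) * (s1 + t1) = m * (s1 + t1) - k * (s1 + t1) := Nat.sub_mul m k _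
        _ ≤ m * (s1 + t1) - m * t1 := Nat.sub_le_sub_left h1 _
        _ = m * s1 + m * t1 - m * t1 := by rw [Nat.mul_add]
        _ = m * s1 := by rw [Nat.add_sub_cancel]
    calc (m - k) * G.card = ((m - k) * (s1 + t1)) * c := by rw [hG_eq, hst, Nat.mul_assoc]
      _ ≤ (m * s1) * c := Nat.mul_le_mul_right c key
      _ = m * (G.filter fun π => π.symm i0 ∈ S).card := by rw [hGS_eq, Nat.mul_assoc]
  -- the pointwise inequality
  have hpt : ∀ ω, ((m - k : ℕ) : ℝ) / m * G.card * Y ω ≤ ∑ π ∈ G, Z π ω := by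
    intro ω
    obtain ⟨i0, hi0⟩ := Finite.exists_max (fun i => X i ω)
    have hY : Y ω = X i0 ω := by
      simp only [hYdef]
      exact le_antisymm (ciSup_le hi0) (le_ciSup (hbdd fun i => X i ω) i0)
    have hnn0 : 0 ≤ X i0 ω := hnn i0 ω
    set GS := G.filter (fun π => π.symm i0 ∈ S) with hGSdef
    have h1 : (GS.card : ℝ) * X i0 ω ≤ ∑ π ∈ G, Z π ω := by
      calc (GS.card : ℝ) * X i0 ω = ∑ _π ∈ GS, X i0 ω := by
                rw [Finset.sum_const, nsmul_eq_mul]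
        _ ≤ ∑ π ∈ GS, Z π ω := by
                refine Finset.sum_le_sum fun π hπ => ?_
                have hπS : π.symm i0 ∈ S := (Finset.mem_filter.1 hπ).2
                have : X i0 ω = if π.symm i0 ∈ S then X (π (π.symm i0)) ω else 0 := by
                  rw [if_pos hπS, Equiv.apply_symm_apply]
                rw [this]
                simp only [hZdef]
                exact le_ciSup (hbdd fun i => if i ∈ S then X (π i) ω else 0) (π.symm i0)
        _ ≤ ∑ π ∈ G, Z π ω := Finset.sum_le_sum_of_subset_of_nonneg
                (Finset.filter_subset _ _) (fun π _ _ => hZnn π ω)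
    have h2 : ((m - k : ℕ) : ℝ) / m * G.card ≤ GS.card := by
      rw [div_mul_eq_mul_div, div_le_iff₀ (show (0:ℝ) < m by exact_mod_cast hm)]
      have h3 := hcount i0
      calc ((m - k : ℕ) : ℝ) * G.card = (((m - k) * G.card : ℕ) : ℝ) := by push_cast; ring
        _ ≤ ((m * (G.filter fun π => π.symm i0 ∈ S).card : ℕ) : ℝ) := by exact_mod_cast h3
        _ = (GS.card : ℝ) * m := by rw [hGSdef]; push_cast; ring
    calc ((m - k : ℕ) : ℝ) / m * G.card * Y ω = ((m - k : ℕ) : ℝ) / m * G.card * X i0 ω := by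
            rw [hY]
      _ ≤ (GS.card : ℝ) * X i0 ω := mul_le_mul_of_nonneg_right h2 hnn0
      _ ≤ ∑ π ∈ G, Z π ω := h1
  -- integrate the pointwise inequality
  have hmono := integral_mono (μ := μ)
    (hYint.const_mul (((m - k : ℕ) : ℝ) / m * G.card))
    (integrable_finset_sum _ fun π _ => hZint π) hpt
  rw [integral_finset_sum _ fun π _ => hZint π] at hmono
  rw [integral_const_mul] at hmono
  have hZeq : ∀ π ∈ G, ∫ ω, Z π ω ∂μ = ∫ ω, Z0 ω ∂μ := fun π hπ =>
    (hZident π hπ).integral_eq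
  rw [Finset.sum_congr rfl hZeq, Finset.sum_const, nsmul_eq_mul] at hmono
  -- identify the integrand of the RHS
  have hite : ∀ ω, (⨆ i, ⨆ _ : i ∈ S, X i ω) = Z0 ω := by
    intro ω
    refine iSup_congr fun i => ?_
    by_cases h : i ∈ S
    · haveI : Nonempty (i ∈ S) := ⟨h⟩
      rw [if_pos h, ciSup_const]
    · haveI : IsEmpty (i ∈ S) := ⟨h⟩
      rw [if_neg h]
      exact Real.iSup_of_isEmpty _
  have hRHS : ∫ ω, (⨆ i ∈ S, X i ω) ∂μ = ∫ ω, Z0 ω ∂μ := by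
    congr 1; funext ω; exact hite ω
  rw [hRHS]
  have hcoef : (1 - (k : ℝ) / m) = ((m - k : ℕ) : ℝ) / m := by
    rw [Nat.cast_sub hkm, sub_div, div_self (by positivity : (m : ℝ) ≠ 0)]
  rw [hcoef]
  have hGpos' : (0 : ℝ) < G.card := by exact_mod_cast hGpos
  nlinarith [hmono, hGpos']
end
end

section
/- Let X_1, …, X_n be independent, nonnegative, integrable random variables and let MAX = E[max_i X_i]. For a permutation π of {1,…,n} and thresholds τ : {1,…,n} → ℝ_{≥0}, define U(π,τ) = Σ_{i=1}^{n} E[X_{π(i)}·1{X_{π(i)} ≥ τ(i)}]·∏_{j<i} P[X_{π(j)} < τ(j)], and let OPT_free = sup over all such (π,τ) of U(π,τ). Then for every ε ∈ (0,1), the supremum of U(π,τ) over pairs (π,τ) whose thresholds all lie in the finite set {max(1 − uε, 0)·MAX : u = 0, 1, …, ⌈1/ε⌉} is at least (1 − 2ε)·OPT_free. -/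
open MeasureTheory ProbabilityTheory

set_option linter.unusedSectionVars false
set_option maxHeartbeats 1000000
set_option maxRecDepth 8000

noncomputable section

/-- The expected reward `U(π,τ)` of the stateless threshold policy that inspects the
variables in the order `π` with thresholds `τ`:
`U(π,τ) = Σ_i E[X_{π(i)}·1{X_{π(i)} ≥ τ(i)}]·∏_{j<i} P[X_{π(j)} < τ(j)]`. -/
def policyValue {Ω : Type} [MeasurableSpace Ω] (μ : Measure Ω) {n : ℕ}
    (X : Fin n → Ω → ℝ) (π : Equiv.Perm (Fin n)) (τ : Fin n → ℝ) : ℝ :=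
  ∑ i : Fin n,
    (∫ ω in {ω | τ i ≤ X (π i) ω}, X (π i) ω ∂μ) *
      ∏ j ∈ Finset.Iio i, (μ {ω | X (π j) ω < τ j}).toReal

namespace ThresholdAux

variable {Ω : Type} [MeasurableSpace Ω]

/-- `AA μ f t = E[f · 1{f ≥ t}]`. -/
def AA (μ : Measure Ω) (f : Ω → ℝ) (t : ℝ) : ℝ := ∫ ω in {ω | t ≤ f ω}, f ω ∂μ

/-- `qq μ f t = P[f < t]`. -/
def qq (μ : Measure Ω) (f : Ω → ℝ) (t : ℝ) : ℝ := (μ {ω | f ω < t}).toReal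

/-- Value of the threshold policy with thresholds `t`, `m` steps remaining;
the step with `m+1` remaining inspects `g m` against threshold `t m`. -/
def vt (μ : Measure Ω) (g : ℕ → Ω → ℝ) (t : ℕ → ℝ) : ℕ → ℝ
  | 0 => 0
  | m + 1 => AA μ (g m) (t m) + qq μ (g m) (t m) * vt μ g t m

/-- The dynamic-programming optimum with `m` steps remaining. -/
def dp (μ : Measure Ω) (g : ℕ → Ω → ℝ) : ℕ → ℝ
  | 0 => 0
  | m + 1 => ∫ ω, max (g m ω) (dp μ g m) ∂μ

/-- Running maximum of the last `m` variables. -/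
def ym (g : ℕ → Ω → ℝ) : ℕ → Ω → ℝ
  | 0 => fun _ => 0
  | m + 1 => fun ω => max (g m ω) (ym g m ω)

section Basic

variable (μ : Measure Ω) [IsProbabilityMeasure μ]

lemma measSet_le {f : Ω → ℝ} (hf : Measurable f) (t : ℝ) :
    MeasurableSet {ω | t ≤ f ω} := measurableSet_le measurable_const hf

lemma measSet_lt {f : Ω → ℝ} (hf : Measurable f) (t : ℝ) :
    MeasurableSet {ω | f ω < t} := measurableSet_lt hf measurable_const

lemma qq_nonneg (f : Ω → ℝ) (t : ℝ) : 0 ≤ qq μ f t := ENNReal.toReal_nonneg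

lemma qq_le_one (f : Ω → ℝ) (t : ℝ) : qq μ f t ≤ 1 := by
  have h := prob_le_one (μ := μ) (s := {ω | f ω < t})
  simpa [qq] using ENNReal.toReal_mono (by simp) h

lemma qq_mono {f : Ω → ℝ} {s t : ℝ} (hst : s ≤ t) : qq μ f s ≤ qq μ f t := by
  apply ENNReal.toReal_mono (measure_ne_top μ _)
  exact measure_mono fun ω hω => lt_of_lt_of_le hω hst

lemma AA_nonneg {f : Ω → ℝ} (hnn : ∀ ω, 0 ≤ f ω) (t : ℝ) : 0 ≤ AA μ f t :=
  setIntegral_nonneg_of_ae_restrict (Filter.Eventually.of_forall fun ω => hnn ω)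

lemma AA_le_integral {f : Ω → ℝ} (hf : Integrable f μ) (hnn : ∀ ω, 0 ≤ f ω) (t : ℝ) :
    AA μ f t ≤ ∫ ω, f ω ∂μ :=
  setIntegral_le_integral hf (Filter.Eventually.of_forall fun ω => hnn ω)

lemma integrable_max_const {f : Ω → ℝ} (hf : Integrable f μ) (c : ℝ) :
    Integrable (fun ω => max (f ω) c) μ := by
  refine Integrable.mono' (hf.abs.add (integrable_const |c|))
    (hf.aestronglyMeasurable.sup aestronglyMeasurable_const) ?_
  refine Filter.Eventually.of_forall fun ω => ?_
  simp only [Real.norm_eq_abs, Pi.add_apply]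
  calc |max (f ω) c| ≤ max |f ω| |c| := abs_max_le_max_abs_abs
    _ ≤ |f ω| + |c| := max_le (le_add_of_nonneg_right (abs_nonneg _))
        (le_add_of_nonneg_left (abs_nonneg _))

lemma integrable_max_fun {f h : Ω → ℝ} (hf : Integrable f μ) (hh : Integrable h μ) :
    Integrable (fun ω => max (f ω) (h ω)) μ := by
  refine Integrable.mono' (hf.abs.add hh.abs)
    (hf.aestronglyMeasurable.sup hh.aestronglyMeasurable) ?_
  refine Filter.Eventually.of_forall fun ω => ?_
  simp only [Real.norm_eq_abs, Pi.add_apply]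
  calc |max (f ω) (h ω)| ≤ max |f ω| |h ω| := abs_max_le_max_abs_abs
    _ ≤ |f ω| + |h ω| := max_le (le_add_of_nonneg_right (abs_nonneg _))
        (le_add_of_nonneg_left (abs_nonneg _))

lemma compl_set_le {f : Ω → ℝ} (t : ℝ) : {ω | t ≤ f ω}ᶜ = {ω | f ω < t} := by
  ext ω; simp [not_le]

/-- `E[max(f,c)] = AA f c + c·qq f c`. -/
lemma max_split {f : Ω → ℝ} (hf : Measurable f) (hfi : Integrable f μ) (c : ℝ) :
    ∫ ω, max (f ω) c ∂μ = AA μ f c + c * qq μ f c := by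
  have hs : MeasurableSet {ω | c ≤ f ω} := measSet_le hf c
  have hint : Integrable (fun ω => max (f ω) c) μ := integrable_max_const μ hfi c
  have hsplit := integral_add_compl hs hint
  rw [compl_set_le] at hsplit
  have h1 : ∫ ω in {ω | c ≤ f ω}, max (f ω) c ∂μ = AA μ f c := by
    refine setIntegral_congr_fun hs fun ω hω => ?_
    exact max_eq_left hω
  have h2 : ∫ ω in {ω | f ω < c}, max (f ω) c ∂μ = c * qq μ f c := by
    rw [show (∫ ω in {ω | f ω < c}, max (f ω) c ∂μ) = ∫ _ in {ω | f ω < c}, c ∂μ from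
      setIntegral_congr_fun (measSet_lt hf c) fun ω hω => max_eq_right (le_of_lt hω)]
    rw [setIntegral_const]
    simp [qq, mul_comm, measureReal_def]
  rw [← hsplit, h1, h2]

/-- `AA f t + qq f t · c ≤ E[max(f,c)]` for every threshold `t`. -/
lemma AA_qq_le_max {f : Ω → ℝ} (hf : Measurable f) (hfi : Integrable f μ) (t c : ℝ) :
    AA μ f t + qq μ f t * c ≤ ∫ ω, max (f ω) c ∂μ := by
  have hs : MeasurableSet {ω | t ≤ f ω} := measSet_le hf t
  have hint : Integrable (fun ω => max (f ω) c) μ := integrable_max_const μ hfi c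
  have hsplit := integral_add_compl hs hint
  rw [compl_set_le] at hsplit
  have h1 : AA μ f t ≤ ∫ ω in {ω | t ≤ f ω}, max (f ω) c ∂μ := by
    refine setIntegral_mono_on hfi.integrableOn hint.integrableOn hs fun ω _ => le_max_left _ _
  have h2 : qq μ f t * c ≤ ∫ ω in {ω | f ω < t}, max (f ω) c ∂μ := by
    have : (∫ _ in {ω | f ω < t}, c ∂μ) ≤ ∫ ω in {ω | f ω < t}, max (f ω) c ∂μ :=
      setIntegral_mono_on (integrableOn_const (measure_ne_top μ _))
        hint.integrableOn (measSet_lt hf t) fun ω _ => le_max_right _ _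
    rw [setIntegral_const] at this
    simpa [qq, smul_eq_mul, measureReal_def] using this
  linarith [hsplit]

/-- Lowering the threshold from `t` to `s` gains at least `s·(qq t − qq s)`. -/
lemma AA_strip {f : Ω → ℝ} (hf : Measurable f) (hfi : Integrable f μ) {s t : ℝ}
    (hs0 : 0 ≤ s) (hst : s ≤ t) :
    AA μ f t + s * (qq μ f t - qq μ f s) ≤ AA μ f s := by
  have hmt : MeasurableSet {ω | t ≤ f ω} := measSet_le hf t
  set strip : Set Ω := {ω | s ≤ f ω ∧ f ω < t} with hstripdef
  have hstrip : MeasurableSet strip :=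
    (measSet_le hf s).inter (measSet_lt hf t)
  have hunion : {ω | s ≤ f ω} = {ω | t ≤ f ω} ∪ strip := by
    ext ω; simp only [hstripdef, Set.mem_setOf_eq, Set.mem_union]
    constructor
    · intro h
      rcases lt_or_ge (f ω) t with h' | h'
      · exact Or.inr ⟨h, h'⟩
      · exact Or.inl h'
    · rintro (h | ⟨h, _⟩)
      · exact le_trans hst h
      · exact h
  have hdisj : Disjoint {ω | t ≤ f ω} strip := by
    rw [Set.disjoint_left]
    rintro ω h1 ⟨_, h3⟩
    simp only [Set.mem_setOf_eq] at h1
    linarith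
  have hsum : AA μ f s = AA μ f t + ∫ ω in strip, f ω ∂μ := by
    unfold AA
    rw [hunion, setIntegral_union hdisj hstrip hfi.integrableOn hfi.integrableOn]
  have hmeas_eq : (μ strip).toReal = qq μ f t - qq μ f s := by
    have : {ω | f ω < t} = {ω | f ω < s} ∪ strip := by
      ext ω; simp only [hstripdef, Set.mem_setOf_eq, Set.mem_union]
      constructor
      · intro h
        rcases lt_or_ge (f ω) s with h' | h'
        · exact Or.inl h'
        · exact Or.inr ⟨h', h⟩
      · rintro (h | ⟨_, h⟩)
        · exact lt_of_lt_of_le h hst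
        · exact h
    have hdisj2 : Disjoint {ω | f ω < s} strip := by
      rw [Set.disjoint_left]
      rintro ω h1 ⟨h2, _⟩
      simp only [Set.mem_setOf_eq] at h1
      linarith
    have hm : μ {ω | f ω < t} = μ {ω | f ω < s} + μ strip := by
      rw [this, measure_union hdisj2 hstrip]
    unfold qq
    rw [hm, ENNReal.toReal_add (measure_ne_top μ _) (measure_ne_top μ _)]
    ring
  have hlow : s * (μ strip).toReal ≤ ∫ ω in strip, f ω ∂μ := by
    refine setIntegral_ge_of_const_le_real hstrip (measure_ne_top μ _) (fun ω hω => hω.1)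
      hfi.integrableOn
  rw [hsum, ← hmeas_eq]
  linarith

end Basic

section Seq

variable (μ : Measure Ω) [IsProbabilityMeasure μ] (g : ℕ → Ω → ℝ)
variable (hgm : ∀ m, Measurable (g m)) (hgi : ∀ m, Integrable (g m) μ)
variable (hgnn : ∀ m ω, 0 ≤ g m ω)

include hgm hgi hgnn

lemma dp_nonneg : ∀ m, 0 ≤ dp μ g m := by
  intro m
  induction m with
  | zero => simp [dp]
  | succ m ih =>
    show 0 ≤ ∫ ω, max (g m ω) (dp μ g m) ∂μ
    exact integral_nonneg fun ω => le_trans (hgnn m ω) (le_max_left _ _)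

lemma vt_le_dp (t : ℕ → ℝ) : ∀ m, vt μ g t m ≤ dp μ g m := by
  intro m
  induction m with
  | zero => exact le_rfl
  | succ m ih =>
    show AA μ (g m) (t m) + qq μ (g m) (t m) * vt μ g t m ≤ ∫ ω, max (g m ω) (dp μ g m) ∂μ
    calc AA μ (g m) (t m) + qq μ (g m) (t m) * vt μ g t m
        ≤ AA μ (g m) (t m) + qq μ (g m) (t m) * dp μ g m := by
          have := mul_le_mul_of_nonneg_left ih (qq_nonneg μ (g m) (t m))
          linarith
      _ ≤ ∫ ω, max (g m ω) (dp μ g m) ∂μ := AA_qq_le_max μ (hgm m) (hgi m) _ _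

lemma vt_nonneg (t : ℕ → ℝ) : ∀ m, 0 ≤ vt μ g t m := by
  intro m
  induction m with
  | zero => simp [vt]
  | succ m ih =>
    show 0 ≤ AA μ (g m) (t m) + qq μ (g m) (t m) * vt μ g t m
    have h1 := AA_nonneg μ (fun ω => hgnn m ω) (t m)
    have h2 := qq_nonneg μ (g m) (t m)
    nlinarith

lemma ym_meas : ∀ m, Measurable (ym g m) := by
  intro m
  induction m with
  | zero => exact measurable_const
  | succ m ih => exact (hgm m).max ih

lemma ym_int : ∀ m, Integrable (ym g m) μ := by
  intro m
  induction m with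
  | zero => exact integrable_const 0
  | succ m ih => exact integrable_max_fun μ (hgi m) ih

lemma ym_nonneg : ∀ m ω, 0 ≤ ym g m ω := by
  intro m
  induction m with
  | zero => intro ω; simp [ym]
  | succ m ih => intro ω; exact le_trans (ih ω) (le_max_right _ _)

lemma ym_mono : ∀ {m m'}, m ≤ m' → ∀ ω, ym g m ω ≤ ym g m' ω := by
  intro m m' h
  induction h with
  | refl => exact fun ω => le_rfl
  | step _ ih => exact fun ω => le_trans (ih ω) (le_max_right _ _)

lemma ym_eq_fold : ∀ m ω, ym g m ω = (Finset.range m).fold max 0 (fun j => g j ω) := by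
  intro m
  induction m with
  | zero => intro ω; simp [ym]
  | succ m ih =>
    intro ω
    rw [Finset.range_add_one, Finset.fold_insert Finset.notMem_range_self]
    show max (g m ω) (ym g m ω) = _
    rw [ih ω]

omit hgm hgi hgnn in
/-- Key independence step: `E[max(f, E h)] ≤ E[max(f, h)]` when `f ⊥ h`. -/
lemma indep_max_bound {f h : Ω → ℝ} (hmf : Measurable f) (hmh : Measurable h)
    (hif : Integrable f μ) (hih : Integrable h μ) (hind : IndepFun f h μ) :
    ∫ ω, max (f ω) (∫ x, h x ∂μ) ∂μ ≤ ∫ ω, max (f ω) (h ω) ∂μ := by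
  set c : ℝ := ∫ x, h x ∂μ with hc
  set φ : ℝ → ℝ := fun x => if x < c then (1 : ℝ) else 0 with hφ
  have hφm : Measurable φ := by
    refine Measurable.ite (measurableSet_lt measurable_id measurable_const)
      measurable_const measurable_const
  set ind : Ω → ℝ := fun ω => φ (f ω) with hindd
  have hindm : Measurable ind := hφm.comp hmf
  have hind01 : ∀ ω, 0 ≤ ind ω ∧ ind ω ≤ 1 := by
    intro ω; simp only [hindd, hφ]; split_ifs <;> norm_num
  have hind_int : Integrable ind μ := by
    refine Integrable.mono' (integrable_const 1) hindm.aestronglyMeasurable ?_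
    exact Filter.Eventually.of_forall fun ω => by
      rcases hind01 ω with ⟨h1, h2⟩; rw [Real.norm_eq_abs, abs_le]; constructor <;> linarith
  have hIind : IndepFun h ind μ := hind.symm.comp measurable_id hφm
  have hmul : ∫ ω, h ω * ind ω ∂μ = c * ∫ ω, ind ω ∂μ := by
    have := IndepFun.integral_mul_eq_mul_integral hIind hih.aestronglyMeasurable hind_int.aestronglyMeasurable
    simpa [Pi.mul_apply, hc] using this
  have hptwise : ∀ ω, max (f ω) c ≤ max (f ω) (h ω) + (c - h ω) * ind ω := by
    intro ω
    simp only [hindd, hφ]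
    split_ifs with hlt
    · have : max (f ω) c = c := max_eq_right (le_of_lt hlt)
      rw [this]
      have := le_max_right (f ω) (h ω)
      linarith
    · push_neg at hlt
      have : max (f ω) c = f ω := max_eq_left hlt
      rw [this]
      have := le_max_left (f ω) (h ω)
      linarith
  have hint_rhs1 : Integrable (fun ω => max (f ω) (h ω)) μ := integrable_max_fun μ hif hih
  have hint_rhs2 : Integrable (fun ω => (c - h ω) * ind ω) μ := by
    refine Integrable.mono' ((integrable_const |c|).add hih.abs)
      (((aestronglyMeasurable_const.sub hih.aestronglyMeasurable).mul
        hind_int.aestronglyMeasurable)) ?_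
    refine Filter.Eventually.of_forall fun ω => ?_
    rcases hind01 ω with ⟨h1, h2⟩
    rw [Real.norm_eq_abs, Pi.add_apply, abs_mul]
    calc |c - h ω| * |ind ω| ≤ |c - h ω| * 1 := by
          apply mul_le_mul_of_nonneg_left _ (abs_nonneg _)
          rw [abs_le]; constructor <;> linarith
      _ = |c - h ω| := mul_one _
      _ ≤ |c| + |h ω| := abs_sub _ _
  have hmono : ∫ ω, max (f ω) c ∂μ ≤
      ∫ ω, (max (f ω) (h ω) + (c - h ω) * ind ω) ∂μ := by
    refine integral_mono (integrable_max_const μ hif c) (hint_rhs1.add hint_rhs2) hptwise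
  have hsum : ∫ ω, (max (f ω) (h ω) + (c - h ω) * ind ω) ∂μ
      = (∫ ω, max (f ω) (h ω) ∂μ) + ∫ ω, (c - h ω) * ind ω ∂μ :=
    integral_add hint_rhs1 hint_rhs2
  have hzero : ∫ ω, (c - h ω) * ind ω ∂μ = 0 := by
    have hexp : ∀ ω, (c - h ω) * ind ω = c * ind ω - h ω * ind ω := fun ω => by ring
    rw [show (fun ω => (c - h ω) * ind ω) = fun ω => c * ind ω - h ω * ind ω from
      funext hexp]
    have hmulint : Integrable (fun ω => h ω * ind ω) μ := by
      refine ((hind_int.const_mul c).sub hint_rhs2).congr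
        (Filter.Eventually.of_forall fun ω => ?_)
      show c * ind ω - (c - h ω) * ind ω = h ω * ind ω
      ring
    rw [integral_sub (hind_int.const_mul c) hmulint]
    rw [integral_const_mul, hmul]
    ring
  rw [hsum, hzero] at hmono
  linarith

lemma dp_le_ym : ∀ m, (∀ j, j < m → IndepFun (g j) (ym g j) μ) →
    dp μ g m ≤ ∫ ω, ym g m ω ∂μ := by
  intro m
  induction m with
  | zero => intro _; simp [dp, ym]
  | succ m ih0 =>
    intro hIndep
    have ih := ih0 fun j hj => hIndep j (Nat.lt_succ_of_lt hj)
    show (∫ ω, max (g m ω) (dp μ g m) ∂μ) ≤ ∫ ω, ym g (m + 1) ω ∂μ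
    have h1 : (∫ ω, max (g m ω) (dp μ g m) ∂μ) ≤
        ∫ ω, max (g m ω) (∫ x, ym g m x ∂μ) ∂μ := by
      refine integral_mono (integrable_max_const μ (hgi m) _)
        (integrable_max_const μ (hgi m) _) fun ω => ?_
      exact max_le_max le_rfl ih
    have h2 := indep_max_bound μ (hgm m) (ym_meas μ g hgm hgi hgnn m) (hgi m)
      (ym_int μ g hgm hgi hgnn m) (hIndep m (Nat.lt_succ_self m))
    calc (∫ ω, max (g m ω) (dp μ g m) ∂μ)
        ≤ ∫ ω, max (g m ω) (∫ x, ym g m x ∂μ) ∂μ := h1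
      _ ≤ ∫ ω, max (g m ω) (ym g m ω) ∂μ := h2
      _ = ∫ ω, ym g (m + 1) ω ∂μ := rfl

lemma integrable_pos_part (c : ℝ) (m : ℕ) :
    Integrable (fun ω => max (g m ω - c) 0) μ := by
  have : Integrable (fun ω => g m ω - c) μ := (hgi m).sub (integrable_const c)
  exact integrable_max_const μ this 0

/-- `AA f c ≥ c(1 − qq f c) + E[(f − c)⁺]`. -/
lemma AA_ge_pospart {c : ℝ} (m : ℕ) :
    c * (1 - qq μ (g m) c) + (∫ ω, max (g m ω - c) 0 ∂μ) ≤ AA μ (g m) c := by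
  have hs : MeasurableSet {ω | c ≤ g m ω} := measSet_le (hgm m) c
  have hint : Integrable (fun ω => max (g m ω - c) 0) μ := integrable_pos_part μ g hgm hgi hgnn c m
  have hsplit := integral_add_compl hs hint
  rw [compl_set_le] at hsplit
  have h2 : ∫ ω in {ω | g m ω < c}, max (g m ω - c) 0 ∂μ = 0 := by
    rw [show (∫ ω in {ω | g m ω < c}, max (g m ω - c) 0 ∂μ)
        = ∫ _ in {ω | g m ω < c}, (0:ℝ) ∂μ from
      setIntegral_congr_fun (measSet_lt (hgm m) c) fun ω hω =>
        max_eq_right (by simp only [Set.mem_setOf_eq] at hω; linarith)]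
    simp
  have h1 : ∫ ω in {ω | c ≤ g m ω}, max (g m ω - c) 0 ∂μ
      = AA μ (g m) c - c * (μ {ω | c ≤ g m ω}).toReal := by
    rw [show (∫ ω in {ω | c ≤ g m ω}, max (g m ω - c) 0 ∂μ)
        = ∫ ω in {ω | c ≤ g m ω}, (g m ω - c) ∂μ from
      setIntegral_congr_fun hs fun ω hω => max_eq_left (by
        simp only [Set.mem_setOf_eq] at hω; linarith)]
    rw [integral_sub (hgi m).integrableOn (integrableOn_const (measure_ne_top μ _))]
    rw [setIntegral_const]
    simp [AA, smul_eq_mul, mul_comm, measureReal_def]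
  have hcompl_meas : (μ {ω | c ≤ g m ω}).toReal = 1 - qq μ (g m) c := by
    have hadd : μ {ω | c ≤ g m ω} + μ {ω | g m ω < c} = 1 := by
      rw [← compl_set_le (f := g m) c, measure_add_measure_compl hs, measure_univ]
    have := congrArg ENNReal.toReal hadd
    rw [ENNReal.toReal_add (measure_ne_top μ _) (measure_ne_top μ _)] at this
    simp only [ENNReal.toReal_one] at this
    unfold qq
    linarith
  have : (∫ ω, max (g m ω - c) 0 ∂μ) = AA μ (g m) c - c * (1 - qq μ (g m) c) := by
    rw [← hsplit, h1, h2, hcompl_meas]; ring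
  linarith [this.le, this.ge]

lemma ym_sub_le_sum_pospart {c : ℝ} (hc : 0 ≤ c) :
    ∀ m ω, ym g m ω - c ≤ ∑ j ∈ Finset.range m, max (g j ω - c) 0 := by
  intro m
  induction m with
  | zero => intro ω; simp [ym]; linarith
  | succ m ih =>
    intro ω
    have hsum0 : (0:ℝ) ≤ ∑ j ∈ Finset.range m, max (g j ω - c) 0 :=
      Finset.sum_nonneg fun j _ => le_max_right _ _
    rw [Finset.sum_range_succ]
    show max (g m ω) (ym g m ω) - c ≤ _
    have h1 : g m ω - c ≤ max (g m ω - c) 0 := le_max_left _ _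
    have h2 := ih ω
    have h3 : (0:ℝ) ≤ max (g m ω - c) 0 := le_max_right _ _
    rcases max_cases (g m ω) (ym g m ω) with ⟨heq, _⟩ | ⟨heq, _⟩ <;> rw [heq] <;> linarith

/-- Prophet-style lower bound on the policy with constant threshold `c`. -/
lemma vt_const_ge (c : ℝ) :
    ∀ m, c * (1 - ∏ j ∈ Finset.range m, qq μ (g j) c)
      + (∏ j ∈ Finset.range m, qq μ (g j) c) *
        (∑ j ∈ Finset.range m, ∫ ω, max (g j ω - c) 0 ∂μ)
      ≤ vt μ g (fun _ => c) m := by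
  intro m
  induction m with
  | zero => simp [vt]
  | succ m ih =>
    set P : ℝ := ∏ j ∈ Finset.range m, qq μ (g j) c with hP
    set S : ℝ := ∑ j ∈ Finset.range m, ∫ ω, max (g j ω - c) 0 ∂μ with hS
    set Q : ℝ := qq μ (g m) c with hQ
    set E : ℝ := ∫ ω, max (g m ω - c) 0 ∂μ with hE
    have hP0 : 0 ≤ P := Finset.prod_nonneg fun j _ => qq_nonneg μ (g j) c
    have hP1 : P ≤ 1 := Finset.prod_le_one (fun j _ => qq_nonneg μ (g j) c)
      (fun j _ => qq_le_one μ (g j) c)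
    have hQ0 : 0 ≤ Q := qq_nonneg μ (g m) c
    have hQ1 : Q ≤ 1 := qq_le_one μ (g m) c
    have hE0 : 0 ≤ E := integral_nonneg fun ω => le_max_right _ _
    have hS0 : 0 ≤ S :=
      Finset.sum_nonneg fun j _ => integral_nonneg fun ω => le_max_right _ _
    have hAA : c * (1 - Q) + E ≤ AA μ (g m) c := AA_ge_pospart μ g hgm hgi hgnn m
    have hvt : c * (1 - P) + P * S ≤ vt μ g (fun _ => c) m := ih
    rw [Finset.prod_range_succ, Finset.sum_range_succ]
    show _ ≤ AA μ (g m) c + Q * vt μ g (fun _ => c) m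
    have hQvt : Q * (c * (1 - P) + P * S) ≤ Q * vt μ g (fun _ => c) m :=
      mul_le_mul_of_nonneg_left hvt hQ0
    have hPQ1 : P * Q ≤ 1 := mul_le_one₀ hP1 hQ0 hQ1
    have hPQ : P * Q * E ≤ E := by
      calc P * Q * E ≤ 1 * E := mul_le_mul_of_nonneg_right hPQ1 hE0
        _ = E := one_mul E
    linarith

lemma dp_ge_half (N : ℕ) :
    (∫ ω, ym g N ω ∂μ) / 2 ≤ dp μ g N := by
  set M' : ℝ := ∫ ω, ym g N ω ∂μ with hM'
  have hM'0 : 0 ≤ M' := integral_nonneg fun ω => ym_nonneg μ g hgm hgi hgnn N ω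
  set c : ℝ := M' / 2 with hcdef
  have hc0 : 0 ≤ c := by positivity
  set P : ℝ := ∏ j ∈ Finset.range N, qq μ (g j) c with hP
  set S : ℝ := ∑ j ∈ Finset.range N, ∫ ω, max (g j ω - c) 0 ∂μ with hS
  have hP0 : 0 ≤ P := Finset.prod_nonneg fun j _ => qq_nonneg μ (g j) c
  have hP1 : P ≤ 1 := Finset.prod_le_one (fun j _ => qq_nonneg μ (g j) c)
    (fun j _ => qq_le_one μ (g j) c)
  have hvt := vt_const_ge μ g hgm hgi hgnn c N
  have hSge : M' - c ≤ S := by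
    have hint : ∀ j ∈ Finset.range N, Integrable (fun ω => max (g j ω - c) 0) μ :=
      fun j _ => integrable_pos_part μ g hgm hgi hgnn c j
    have hsum_eq : S = ∫ ω, ∑ j ∈ Finset.range N, max (g j ω - c) 0 ∂μ :=
      (integral_finset_sum (Finset.range N) hint).symm
    have hmono : (∫ ω, (ym g N ω - c) ∂μ) ≤ ∫ ω, ∑ j ∈ Finset.range N, max (g j ω - c) 0 ∂μ := by
      refine integral_mono ((ym_int μ g hgm hgi hgnn N).sub (integrable_const c))
        (integrable_finset_sum _ hint) fun ω => ?_
      exact ym_sub_le_sum_pospart μ g hgm hgi hgnn hc0 N ω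
    rw [integral_sub (ym_int μ g hgm hgi hgnn N) (integrable_const c)] at hmono
    simp only [integral_const, probReal_univ, smul_eq_mul, one_mul] at hmono
    rw [hsum_eq]
    exact le_trans (le_of_eq rfl) hmono
  have hdp := vt_le_dp μ g hgm hgi hgnn (fun _ => c) N
  have hPS : P * (M' - c) ≤ P * S := mul_le_mul_of_nonneg_left hSge hP0
  have : c * (1 - P) + P * (M' - c) ≤ dp μ g N := by
    calc c * (1 - P) + P * (M' - c) ≤ c * (1 - P) + P * S := by linarith
      _ ≤ vt μ g (fun _ => c) N := hvt
      _ ≤ dp μ g N := hdp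
  have hMc : M' - c = c := by rw [hcdef]; ring
  rw [hMc] at this
  calc M' / 2 = c := rfl
    _ = c * (1 - P) + P * c := by ring
    _ ≤ dp μ g N := this

/-- The rounding induction: thresholds within `K` below the DP values lose at most `K`. -/
lemma rounding (N : ℕ) (K : ℝ) (hK : 0 ≤ K) (t'' : ℕ → ℝ)
    (h1 : ∀ m < N, 0 ≤ t'' m) (h2 : ∀ m < N, t'' m ≤ dp μ g m)
    (h3 : ∀ m < N, dp μ g m - K ≤ t'' m) :
    ∀ m ≤ N, dp μ g m - K ≤ vt μ g t'' m := by
  intro m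
  induction m with
  | zero => intro _; simp [dp, vt]; linarith
  | succ m ih =>
    intro hmN
    have hmN' : m < N := Nat.lt_of_succ_le hmN
    have ihm := ih (le_of_lt hmN')
    set s : ℝ := t'' m with hsdef
    set d : ℝ := dp μ g m with hddef
    have hs0 : 0 ≤ s := h1 m hmN'
    have hsd : s ≤ d := h2 m hmN'
    have hdK : d - K ≤ s := h3 m hmN'
    set q0 : ℝ := qq μ (g m) s with hq0def
    set q1 : ℝ := qq μ (g m) d with hq1def
    have hq00 : 0 ≤ q0 := qq_nonneg μ (g m) s
    have hq01 : q0 ≤ q1 := qq_mono μ hsd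
    have hq11 : q1 ≤ 1 := qq_le_one μ (g m) d
    have hstrip : AA μ (g m) d + s * (q1 - q0) ≤ AA μ (g m) s :=
      AA_strip μ (hgm m) (hgi m) hs0 hsd
    have hsplit : dp μ g (m + 1) = AA μ (g m) d + d * q1 := max_split μ (hgm m) (hgi m) d
    have hvt : vt μ g t'' (m + 1) = AA μ (g m) s + q0 * vt μ g t'' m := rfl
    have hq0vt : q0 * (d - K) ≤ q0 * vt μ g t'' m := mul_le_mul_of_nonneg_left ihm hq00
    have key : (q1 - q0) * (d - s) ≤ (q1 - q0) * K := by
      apply mul_le_mul_of_nonneg_left _ (by linarith)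
      linarith
    have hKq1 : K * q1 ≤ K := by nlinarith
    rw [hsplit, hvt]
    nlinarith

omit hgm hgi hgnn in
/-- Closed form for `vt`. -/
lemma vt_eq_sum (t : ℕ → ℝ) (N : ℕ) :
    vt μ g t N = ∑ m ∈ Finset.range N,
      AA μ (g m) (t m) * ∏ j ∈ Finset.Ico (m + 1) N, qq μ (g j) (t j) := by
  induction N with
  | zero => simp [vt]
  | succ N ih =>
    rw [Finset.sum_range_succ]
    have hlast : ∏ j ∈ Finset.Ico (N + 1) (N + 1), qq μ (g j) (t j) = 1 := by simp
    rw [hlast, mul_one]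
    have hstep : ∀ m ∈ Finset.range N,
        AA μ (g m) (t m) * ∏ j ∈ Finset.Ico (m + 1) (N + 1), qq μ (g j) (t j)
        = qq μ (g N) (t N) * (AA μ (g m) (t m) * ∏ j ∈ Finset.Ico (m + 1) N, qq μ (g j) (t j)) := by
      intro m hm
      rw [Finset.prod_Ico_succ_top (Nat.succ_le_of_lt (Finset.mem_range.mp hm))]
      ring
    rw [Finset.sum_congr rfl hstep, ← Finset.mul_sum, ← ih]
    show vt μ g t (N + 1) = _
    show AA μ (g N) (t N) + qq μ (g N) (t N) * vt μ g t N = _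
    ring

end Seq

/-- Fold-max of measurable coordinate functions is measurable. -/
lemma measurable_fold_max {α : Type*} {β : Type*} [MeasurableSpace β]
    (s : Finset α) (F : α → β → ℝ) (hF : ∀ a, Measurable (F a)) :
    Measurable (fun v => s.fold max (0:ℝ) (fun a => F a v)) := by
  classical
  induction s using Finset.induction_on with
  | empty => simpa using measurable_const
  | @insert a s ha ih =>
    have : (fun v => (insert a s).fold max (0:ℝ) (fun b => F b v))
        = fun v => max (F a v) (s.fold max 0 (fun b => F b v)) := by
      funext v; rw [Finset.fold_insert ha]
    rw [this]
    exact (hF a).max ih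

lemma fin_prod_Iio {n : ℕ} (i : Fin n) (H : ℕ → ℝ) :
    ∏ j ∈ Finset.Iio i, H j.val = ∏ j ∈ Finset.range i.val, H j := by
  rw [show Finset.range i.val = (Finset.Iio i).image Fin.val by
    ext m
    simp only [Finset.mem_range, Finset.mem_image, Finset.mem_Iio]
    constructor
    · intro hm
      exact ⟨⟨m, lt_trans hm i.isLt⟩, hm, rfl⟩
    · rintro ⟨j, hj, rfl⟩
      exact hj]
  rw [Finset.prod_image]
  intro a _ b _ hab
  exact Fin.val_injective hab

lemma prod_reflect_Ico (Q : ℕ → ℝ) {m n : ℕ} (hmn : m < n) :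
    ∏ j ∈ Finset.range (n - 1 - m), Q (n - 1 - j) = ∏ j ∈ Finset.Ico (m + 1) n, Q j := by
  rw [show Finset.Ico (m + 1) n = (Finset.range (n - 1 - m)).image (fun j => n - 1 - j) by
    ext k
    simp only [Finset.mem_Ico, Finset.mem_image, Finset.mem_range]
    constructor
    · rintro ⟨h1, h2⟩
      exact ⟨n - 1 - k, by omega, by omega⟩
    · rintro ⟨j, hj, rfl⟩
      omega]
  rw [Finset.prod_image]
  intro a ha b hb hab
  simp only [Finset.coe_range, Set.mem_Iio, Finset.mem_coe, Finset.mem_range] at ha hb hab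
  omega

/-- Existence of a grid point just below `c` in `[0, M]`. -/
lemma grid_exists {M ε : ℝ} (hM : 0 ≤ M) (hε0 : 0 < ε) (c : ℝ) (hc0 : 0 ≤ c) (hcM : c ≤ M) :
    ∃ u : ℕ, u ≤ Nat.ceil (1 / ε) ∧ max (1 - (u : ℝ) * ε) 0 * M ≤ c ∧
      c - ε * M ≤ max (1 - (u : ℝ) * ε) 0 * M := by
  rcases eq_or_lt_of_le hM with hM0 | hMpos
  · refine ⟨0, Nat.zero_le _, ?_, ?_⟩
    · rw [← hM0, mul_zero]; exact hc0
    · rw [← hM0, mul_zero, mul_zero]; linarith [hcM, hM0.symm ▸ hcM]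
  · set x : ℝ := (1 - c / M) / ε with hx
    refine ⟨⌈x⌉₊, ?_, ?_, ?_⟩
    · apply Nat.ceil_le_ceil
      rw [hx, div_le_div_iff_of_pos_right hε0]
      have : 0 ≤ c / M := div_nonneg hc0 hM
      linarith
    · rcases le_or_gt (1 - (⌈x⌉₊ : ℝ) * ε) 0 with h | h
      · rw [max_eq_right h, zero_mul]; exact hc0
      · rw [max_eq_left h.le]
        have hle : x ≤ (⌈x⌉₊ : ℝ) := Nat.le_ceil x
        have hxε : x * ε = 1 - c / M := by
          rw [hx, div_mul_cancel₀ _ (ne_of_gt hε0)]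
        have h1 : 1 - c / M ≤ (⌈x⌉₊ : ℝ) * ε := by
          have := mul_le_mul_of_nonneg_right hle hε0.le
          linarith [hxε ▸ this]
        have h2 : (1 - (⌈x⌉₊ : ℝ) * ε) * M ≤ (c / M) * M :=
          mul_le_mul_of_nonneg_right (by linarith) hM
        rwa [div_mul_cancel₀ c (ne_of_gt hMpos)] at h2
    · rcases Nat.eq_zero_or_pos ⌈x⌉₊ with h0 | hupos
      · have hx0 : x ≤ 0 := by
          by_contra hcon
          push_neg at hcon
          have := Nat.ceil_pos.mpr hcon
          omega
        have hnum : 1 - c / M ≤ 0 := by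
          rcases (div_nonpos_iff.mp (hx ▸ hx0)) with ⟨h1, h2⟩ | ⟨h1, h2⟩
          · linarith
          · linarith
        have hcM' : M ≤ c := by
          have h1 : 1 ≤ c / M := by linarith
          have := mul_le_mul_of_nonneg_right h1 hM
          rwa [one_mul, div_mul_cancel₀ c (ne_of_gt hMpos)] at this
        have hceq : c = M := le_antisymm hcM hcM'
        rw [h0]
        push_cast
        rw [zero_mul, sub_zero, max_eq_left zero_le_one, one_mul, hceq]
        nlinarith
      · have hxpos : 0 < x := Nat.ceil_pos.mp hupos
        have hlt : (⌈x⌉₊ : ℝ) < x + 1 := Nat.ceil_lt_add_one hxpos.le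
        have hxε : x * ε = 1 - c / M := by
          rw [hx, div_mul_cancel₀ _ (ne_of_gt hε0)]
        have h1 : (⌈x⌉₊ : ℝ) * ε < (1 - c / M) + ε := by
          have := mul_lt_mul_of_pos_right hlt hε0
          nlinarith
        have h2 : c - ε * M ≤ (1 - (⌈x⌉₊ : ℝ) * ε) * M := by
          have h3 : c / M - ε ≤ 1 - (⌈x⌉₊ : ℝ) * ε := by linarith
          have h4 := mul_le_mul_of_nonneg_right h3 hM
          rw [sub_mul, div_mul_cancel₀ c (ne_of_gt hMpos)] at h4
          linarith
        exact le_trans h2 (mul_le_mul_of_nonneg_right (le_max_left _ _) hM)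

lemma policyValue_nonneg {Ω : Type} [MeasurableSpace Ω] (μ : Measure Ω) {n : ℕ}
    (X : Fin n → Ω → ℝ) (hnn : ∀ i ω, 0 ≤ X i ω) (π : Equiv.Perm (Fin n)) (τ : Fin n → ℝ) :
    0 ≤ policyValue μ X π τ :=
  Finset.sum_nonneg fun i _ => mul_nonneg
    (setIntegral_nonneg_of_ae_restrict (Filter.Eventually.of_forall fun ω => hnn _ ω))
    (Finset.prod_nonneg fun _ _ => ENNReal.toReal_nonneg)

lemma policyValue_le_sum {Ω : Type} [MeasurableSpace Ω] (μ : Measure Ω) [IsProbabilityMeasure μ]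
    {n : ℕ} (X : Fin n → Ω → ℝ) (hnn : ∀ i ω, 0 ≤ X i ω) (hint : ∀ i, Integrable (X i) μ)
    (π : Equiv.Perm (Fin n)) (τ : Fin n → ℝ) :
    policyValue μ X π τ ≤ ∑ i, ∫ ω, X i ω ∂μ := by
  have hterm : ∀ i : Fin n, (∫ ω in {ω | τ i ≤ X (π i) ω}, X (π i) ω ∂μ) *
      ∏ j ∈ Finset.Iio i, (μ {ω | X (π j) ω < τ j}).toReal ≤ ∫ ω, X (π i) ω ∂μ := by
    intro i
    have h1 : (∫ ω in {ω | τ i ≤ X (π i) ω}, X (π i) ω ∂μ) ≤ ∫ ω, X (π i) ω ∂μ :=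
      setIntegral_le_integral (hint _) (Filter.Eventually.of_forall fun ω => hnn _ ω)
    have h2 : (∏ j ∈ Finset.Iio i, (μ {ω | X (π j) ω < τ j}).toReal) ≤ 1 :=
      Finset.prod_le_one (fun _ _ => ENNReal.toReal_nonneg)
        (fun j _ => ThresholdAux.qq_le_one μ (X (π j)) (τ j))
    calc (∫ ω in {ω | τ i ≤ X (π i) ω}, X (π i) ω ∂μ) *
        ∏ j ∈ Finset.Iio i, (μ {ω | X (π j) ω < τ j}).toReal
        ≤ (∫ ω, X (π i) ω ∂μ) * 1 := by
          refine mul_le_mul h1 h2 (Finset.prod_nonneg fun _ _ => ENNReal.toReal_nonneg)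
            (integral_nonneg (hnn _))
      _ = ∫ ω, X (π i) ω ∂μ := mul_one _
  calc policyValue μ X π τ ≤ ∑ i, ∫ ω, X (π i) ω ∂μ := Finset.sum_le_sum fun i _ => hterm i
    _ = ∑ i, ∫ ω, X i ω ∂μ := Equiv.sum_comp π fun i => ∫ ω, X i ω ∂μ

/-- `policyValue` equals the reversed-order recursion value `vt`. -/
lemma policyValue_eq_vt {Ω : Type} [MeasurableSpace Ω] (μ : Measure Ω) [IsProbabilityMeasure μ]
    {n : ℕ} (X : Fin n → Ω → ℝ) (π : Equiv.Perm (Fin n)) (σ : Fin n → ℝ)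
    (idx : ℕ → Fin n) (hidxval : ∀ m, (idx m).val = n - 1 - m) :
    policyValue μ X π σ =
      ThresholdAux.vt μ (fun m => X (π (idx m))) (fun m => σ (idx m)) n := by
  have hidxinv : ∀ i : Fin n, idx (n - 1 - i.val) = i := by
    intro i
    apply Fin.ext
    rw [hidxval]
    have := i.isLt
    omega
  set G : ℕ → ℝ := fun k => AA μ (X (π (idx (n - 1 - k)))) (σ (idx (n - 1 - k))) *
    ∏ j ∈ Finset.range k, qq μ (X (π (idx (n - 1 - j)))) (σ (idx (n - 1 - j))) with hG
  have step1 : policyValue μ X π σ = ∑ k ∈ Finset.range n, G k := by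
    rw [← Fin.sum_univ_eq_sum_range G n]
    unfold policyValue
    apply Finset.sum_congr rfl
    intro i _
    simp only [hG, hidxinv i]
    congr 1
    rw [← fin_prod_Iio i (fun j => qq μ (X (π (idx (n - 1 - j)))) (σ (idx (n - 1 - j))))]
    apply Finset.prod_congr rfl
    intro j _
    rw [hidxinv j]
    rfl
  rw [step1, ThresholdAux.vt_eq_sum, ← Finset.sum_range_reflect G n]
  apply Finset.sum_congr rfl
  intro m hm
  have hmn : m < n := Finset.mem_range.mp hm
  simp only [hG]
  have e1 : n - 1 - (n - 1 - m) = m := by omega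
  rw [e1]
  congr 1
  exact prod_reflect_Ico (fun j => qq μ (X (π (idx j))) (σ (idx j))) hmn

end ThresholdAux

open ThresholdAux

/-- **Threshold discretization** (Lemma 12 of the paper): for independent nonnegative
integrable random variables, the supremum of `U(π,τ)` over stateless policies whose
thresholds all lie in the finite grid `{max(1 − uε, 0)·MAX : 0 ≤ u ≤ ⌈1/ε⌉}` is at least
`(1 − 2ε)` times `OPT_free = sup U(π,τ)` over all stateless policies with nonnegative
thresholds. -/
theorem threshold_discretization
    {Ω : Type} [MeasurableSpace Ω] (μ : Measure Ω) [IsProbabilityMeasure μ]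
    (n : ℕ) (hn : 0 < n) (X : Fin n → Ω → ℝ)
    (hmeas : ∀ i, Measurable (X i))
    (hnn : ∀ i ω, 0 ≤ X i ω)
    (hint : ∀ i, Integrable (X i) μ)
    (hindep : iIndepFun X μ)
    (ε : ℝ) (hε : ε ∈ Set.Ioo (0:ℝ) 1) :
    (1 - 2 * ε) *
        sSup {v | ∃ (π : Equiv.Perm (Fin n)) (τ : Fin n → ℝ),
          (∀ i, 0 ≤ τ i) ∧ v = policyValue μ X π τ} ≤
      sSup {v | ∃ (π : Equiv.Perm (Fin n)) (τ : Fin n → ℝ),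
          (∀ i, ∃ u : ℕ, u ≤ Nat.ceil (1 / ε) ∧
            τ i = max (1 - (u : ℝ) * ε) 0 * (∫ ω, (⨆ i', X i' ω) ∂μ)) ∧
          v = policyValue μ X π τ} := by
  obtain ⟨hε0, hε1⟩ := hε
  haveI : Nonempty (Fin n) := ⟨⟨0, hn⟩⟩
  set Mint : ℝ := ∫ ω, (⨆ i', X i' ω) ∂μ with hMint
  set A : Set ℝ := {v | ∃ (π : Equiv.Perm (Fin n)) (τ : Fin n → ℝ),
          (∀ i, 0 ≤ τ i) ∧ v = policyValue μ X π τ} with hA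
  set B : Set ℝ := {v | ∃ (π : Equiv.Perm (Fin n)) (τ : Fin n → ℝ),
          (∀ i, ∃ u : ℕ, u ≤ Nat.ceil (1 / ε) ∧
            τ i = max (1 - (u : ℝ) * ε) 0 * Mint) ∧
          v = policyValue μ X π τ} with hB
  -- boundedness and nonemptiness of the two sets
  have hBddA : BddAbove A := by
    refine ⟨∑ i, ∫ ω, X i ω ∂μ, ?_⟩
    rintro v ⟨π, τ, _, rfl⟩
    exact policyValue_le_sum μ X hnn hint π τ
  have hBddB : BddAbove B := by
    refine ⟨∑ i, ∫ ω, X i ω ∂μ, ?_⟩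
    rintro v ⟨π, τ, _, rfl⟩
    exact policyValue_le_sum μ X hnn hint π τ
  have hAne : A.Nonempty := ⟨policyValue μ X 1 (fun _ => 0), 1, fun _ => 0,
    fun _ => le_rfl, rfl⟩
  have hBmem : policyValue μ X 1 (fun _ => max (1 - ((Nat.ceil (1/ε) : ℕ) : ℝ) * ε) 0 * Mint)
      ∈ B := ⟨1, _, fun _ => ⟨Nat.ceil (1/ε), le_rfl, rfl⟩, rfl⟩
  have hB0 : 0 ≤ sSup B :=
    le_trans (policyValue_nonneg μ X hnn 1 _) (le_csSup hBddB hBmem)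
  -- the key pointwise estimate
  have key : ∀ v ∈ A, (1 - 2 * ε) * v ≤ sSup B := by
    rintro v ⟨π, τ, hτ, rfl⟩
    set idx : ℕ → Fin n := fun m => ⟨n - 1 - m, by omega⟩ with hidx
    have hidxval : ∀ m, (idx m).val = n - 1 - m := fun m => rfl
    set g : ℕ → Ω → ℝ := fun m => X (π (idx m)) with hg
    have hgm : ∀ m, Measurable (g m) := fun m => hmeas _
    have hgi : ∀ m, Integrable (g m) μ := fun m => hint _
    have hgnn : ∀ m ω, 0 ≤ g m ω := fun m ω => hnn _ ω
    -- independence of each variable from the running max of the previously-recursed ones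
    have hIndep : ∀ m < n, IndepFun (g m) (ThresholdAux.ym g m) μ := by
      intro m hmn
      set i0 : Fin n := π (idx m) with hi0
      set T : Finset (Fin n) := Finset.univ.erase i0 with hT
      have hdisj : Disjoint ({i0} : Finset (Fin n)) T := by
        simp [hT, Finset.disjoint_left]
      have hbase := hindep.indepFun_finset {i0} T hdisj hmeas
      set φ : ({x // x ∈ ({i0} : Finset (Fin n))} → ℝ) → ℝ :=
        fun v => v ⟨i0, by simp⟩ with hφ
      set ψ : ({x // x ∈ T} → ℝ) → ℝ := fun v =>
        (Finset.range m).fold max 0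
          (fun j => if hj : π (idx j) ∈ T then v (⟨π (idx j), hj⟩ : {x // x ∈ T})
            else 0) with hψ
      have hφm : Measurable φ := measurable_pi_apply _
      have hψm : Measurable ψ := by
        apply ThresholdAux.measurable_fold_max
        intro j
        by_cases hj : π (idx j) ∈ T
        · simpa [hj] using measurable_pi_apply (⟨π (idx j), hj⟩ : {x // x ∈ T})
        · simpa [hj] using (measurable_const : Measurable fun _ : ({x // x ∈ T} → ℝ) => (0:ℝ))
      have hcomp := hbase.comp hφm hψm
      have h1 : (φ ∘ fun ω (i : ({i0} : Finset (Fin n))) => X i ω) = g m := rfl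
      have h2 : (ψ ∘ fun ω (i : T) => X i ω) = ThresholdAux.ym g m := by
        funext ω
        show (Finset.range m).fold max 0 _ = _
        rw [ThresholdAux.ym_eq_fold μ g hgm hgi hgnn m ω]
        apply Finset.fold_congr
        intro j hj
        have hjm : j < m := Finset.mem_range.mp hj
        have hne : π (idx j) ≠ i0 := by
          rw [hi0]
          intro hcontra
          have h3 := π.injective hcontra
          have h4 : n - 1 - j = n - 1 - m := by
            have := congrArg Fin.val h3
            simpa [hidxval] using this
          omega
        have hjT : π (idx j) ∈ T := by simp [hT, hne]
        simp [hjT, hg]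
      rw [h1, h2] at hcomp
      exact hcomp
    -- identify the running maximum with the overall sup
    set Mn : ℝ := ∫ ω, ThresholdAux.ym g n ω ∂μ with hMn
    have hymle : ∀ m ω, ThresholdAux.ym g m ω ≤ ⨆ i', X i' ω := by
      intro m ω
      induction m with
      | zero =>
        exact le_trans (hnn ⟨0, hn⟩ ω)
          (le_ciSup (f := fun i' => X i' ω)
            (Set.Finite.bddAbove (Set.finite_range _)) ⟨0, hn⟩)
      | succ m ih =>
        show max (g m ω) _ ≤ _
        exact max_le (le_ciSup (f := fun i' => X i' ω)
          (Set.Finite.bddAbove (Set.finite_range _)) (π (idx m))) ih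
    have hglt : ∀ (j m' : ℕ) (ω : Ω), j < m' → g j ω ≤ ThresholdAux.ym g m' ω := by
      intro j m' ω hjm
      induction m' with
      | zero => omega
      | succ m' ih =>
        rcases Nat.lt_succ_iff_lt_or_eq.mp hjm with h | h
        · exact le_trans (ih h) (le_max_right _ _)
        · subst h; exact le_max_left _ _
    have hymn_eq : ∀ ω, ThresholdAux.ym g n ω = ⨆ i', X i' ω := by
      intro ω
      apply le_antisymm (hymle n ω)
      apply ciSup_le
      intro i
      have hidxinv : idx (n - 1 - (π.symm i).val) = π.symm i := by
        apply Fin.ext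
        rw [hidxval]
        have := (π.symm i).isLt
        omega
      have hXi : g (n - 1 - (π.symm i).val) ω = X i ω := by
        rw [hg]
        simp only [hidxinv, Equiv.apply_symm_apply]
      rw [← hXi]
      apply hglt
      have := (π.symm i).isLt
      omega
    have hMnint : Mn = Mint := by
      rw [hMn, hMint]
      exact integral_congr_ae (Filter.Eventually.of_forall fun ω => hymn_eq ω)
    have hMn0 : 0 ≤ Mn :=
      integral_nonneg fun ω => ThresholdAux.ym_nonneg μ g hgm hgi hgnn n ω
    have hMint0 : 0 ≤ Mint := hMnint ▸ hMn0
    -- dp bounds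
    have hdp0 : ∀ m, 0 ≤ ThresholdAux.dp μ g m := ThresholdAux.dp_nonneg μ g hgm hgi hgnn
    have hdpym : ∀ m ≤ n, ThresholdAux.dp μ g m ≤ Mint := by
      intro m hm
      have h1 := ThresholdAux.dp_le_ym μ g hgm hgi hgnn m
        (fun j hj => hIndep j (lt_of_lt_of_le hj hm))
      rw [← hMnint]
      refine le_trans h1 ?_
      refine integral_mono (ThresholdAux.ym_int μ g hgm hgi hgnn m)
        (ThresholdAux.ym_int μ g hgm hgi hgnn n)
        (fun ω => ThresholdAux.ym_mono μ g hgm hgi hgnn hm ω)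
    have hpro : Mint / 2 ≤ ThresholdAux.dp μ g n := by
      rw [← hMnint]
      exact ThresholdAux.dp_ge_half μ g hgm hgi hgnn n
    -- grid thresholds
    have hchoice : ∀ i : Fin n, ∃ u : ℕ, u ≤ Nat.ceil (1 / ε) ∧
        max (1 - (u : ℝ) * ε) 0 * Mint ≤ ThresholdAux.dp μ g (n - 1 - i.val) ∧
        ThresholdAux.dp μ g (n - 1 - i.val) - ε * Mint ≤ max (1 - (u : ℝ) * ε) 0 * Mint := by
      intro i
      exact grid_exists hMint0 hε0 _ (hdp0 _) (hdpym _ (by omega))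
    choose u hu hgu1 hgu2 using hchoice
    set τ'' : Fin n → ℝ := fun i => max (1 - (u i : ℝ) * ε) 0 * Mint with hτ''
    set t'' : ℕ → ℝ := fun m => τ'' (idx m) with ht''
    have hvalm : ∀ m, m < n → n - 1 - (idx m).val = m := by
      intro m hm
      rw [hidxval]
      omega
    have hround := ThresholdAux.rounding μ g hgm hgi hgnn n (ε * Mint)
      (mul_nonneg hε0.le hMint0) t''
      (fun m hm => mul_nonneg (le_max_right _ _) hMint0)
      (fun m hm => by
        have := hgu1 (idx m)
        rwa [hvalm m hm] at this)
      (fun m hm => by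
        have := hgu2 (idx m)
        rwa [hvalm m hm] at this)
      n le_rfl
    -- assembling
    have hconv : policyValue μ X π τ =
        ThresholdAux.vt μ g (fun m => τ (idx m)) n :=
      policyValue_eq_vt μ X π τ idx hidxval
    have hconv'' : policyValue μ X π τ'' = ThresholdAux.vt μ g t'' n :=
      policyValue_eq_vt μ X π τ'' idx hidxval
    have hle1 : ThresholdAux.vt μ g (fun m => τ (idx m)) n ≤ ThresholdAux.dp μ g n :=
      ThresholdAux.vt_le_dp μ g hgm hgi hgnn _ n
    have hgridmem : policyValue μ X π τ'' ∈ B := ⟨π, τ'', fun i => ⟨u i, hu i, rfl⟩, rfl⟩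
    have hBle : ThresholdAux.vt μ g t'' n ≤ sSup B :=
      hconv'' ▸ le_csSup hBddB hgridmem
    have hvdp : policyValue μ X π τ ≤ ThresholdAux.dp μ g n := hconv ▸ hle1
    have hv0 : 0 ≤ policyValue μ X π τ := policyValue_nonneg μ X hnn π τ
    rcases le_or_gt (1 - 2 * ε) 0 with hneg | hpos
    · have h1 : (1 - 2 * ε) * policyValue μ X π τ ≤ 0 := mul_nonpos_of_nonpos_of_nonneg hneg hv0
      linarith [hB0]
    · have h1 : (1 - 2 * ε) * policyValue μ X π τ ≤ (1 - 2 * ε) * ThresholdAux.dp μ g n :=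
        mul_le_mul_of_nonneg_left hvdp hpos.le
      have h2 : (1 - 2 * ε) * ThresholdAux.dp μ g n ≤ ThresholdAux.dp μ g n - ε * Mint := by
        nlinarith [mul_nonneg hε0.le (show (0:ℝ) ≤ 2 * ThresholdAux.dp μ g n - Mint by linarith)]
      linarith [hround, hBle]
  -- conclude
  rcases le_or_gt (1 - 2 * ε) 0 with hneg | hpos
  · have hA0 : 0 ≤ sSup A := by
      obtain ⟨v0, hv0⟩ := hAne
      rcases hv0 with ⟨π, τ, _, rfl⟩
      exact le_trans (policyValue_nonneg μ X hnn π τ)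
        (le_csSup hBddA ⟨π, τ, ‹_›, rfl⟩)
    have := mul_nonpos_of_nonpos_of_nonneg hneg hA0
    linarith
  · have hsup : sSup A ≤ sSup B / (1 - 2 * ε) := by
      apply csSup_le hAne
      intro v hv
      rw [le_div_iff₀ hpos]
      calc v * (1 - 2 * ε) = (1 - 2 * ε) * v := mul_comm _ _
        _ ≤ sSup B := key v hv
    calc (1 - 2 * ε) * sSup A ≤ (1 - 2 * ε) * (sSup B / (1 - 2 * ε)) :=
        mul_le_mul_of_nonneg_left hsup hpos.le
      _ = sSup B := mul_div_cancel₀ _ (ne_of_gt hpos)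
end
end

section
/- Let n ≥ 1, let λ_1 ≥ λ_2 ≥ … ≥ λ_n ≥ 0 be reals, and let p_1, …, p_n ∈ [0,1]. Then for every permutation σ of {1,…,n}: Σ_{i=1}^{n} λ_{σ(i)}·(1 − p_{σ(i)})·∏_{j<i} p_{σ(j)} ≤ Σ_{i=1}^{n} λ_i·(1 − p_i)·∏_{j<i} p_j. In other words, among all orderings of the pairs (λ_i, p_i), the expected reward Σ_i λ_i(1−p_i)∏_{j<i}p_j is maximized by processing the pairs in nonincreasing order of λ. -/
open Finset

/-- Telescoping: summing "stop at `i`" probabilities over a finite set of rounds. -/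
lemma telescope_aux {n : ℕ} (q : Fin n → ℝ) (T : Finset (Fin n)) :
    ∑ i ∈ T, (1 - q i) * ∏ j ∈ T.filter (· < i), q j = 1 - ∏ j ∈ T, q j := by
  induction T using Finset.induction_on_max with
  | empty => simp
  | insert a s ha ih =>
    have has : a ∉ s := fun h => lt_irrefl a (ha a h)
    have hfa : (insert a s).filter (· < a) = s := by
      ext j
      simp only [mem_filter, mem_insert]
      constructor
      · rintro ⟨h1 | h1, h2⟩
        · exact absurd (h1 ▸ h2) (lt_irrefl a)
        · exact h1
      · intro hj; exact ⟨Or.inr hj, ha j hj⟩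
    have hstep : ∀ i ∈ s, (insert a s).filter (· < i) = s.filter (· < i) := by
      intro i hi
      ext j
      simp only [mem_filter, mem_insert]
      constructor
      · rintro ⟨h1 | h1, h2⟩
        · exact absurd ((h1 ▸ h2).trans (ha i hi)) (lt_irrefl a)
        · exact ⟨h1, h2⟩
      · rintro ⟨h1, h2⟩; exact ⟨Or.inr h1, h2⟩
    rw [Finset.sum_insert has, Finset.prod_insert has, hfa,
      Finset.sum_congr rfl (fun i hi => by rw [hstep i hi]), ih]
    ring

/-- Upper bound: probability of stopping inside `T` is at most `1 - ∏_{T} q`. -/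
lemma sum_le_aux {n : ℕ} (q : Fin n → ℝ) (hq : ∀ i, q i ∈ Set.Icc (0:ℝ) 1)
    (T : Finset (Fin n)) :
    ∑ i ∈ T, (1 - q i) * ∏ j ∈ Finset.Iio i, q j ≤ 1 - ∏ j ∈ T, q j := by
  rw [← telescope_aux q T]
  apply Finset.sum_le_sum
  intro i hi
  apply mul_le_mul_of_nonneg_left _ (by linarith [(hq i).2])
  have hsub : T.filter (· < i) ⊆ Finset.Iio i :=
    fun j hj => mem_Iio.mpr (mem_filter.mp hj).2
  calc ∏ j ∈ Finset.Iio i, q j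
      = (∏ j ∈ Finset.Iio i \ T.filter (· < i), q j) *
          ∏ j ∈ T.filter (· < i), q j := (Finset.prod_sdiff hsub).symm
    _ ≤ 1 * ∏ j ∈ T.filter (· < i), q j := by
        apply mul_le_mul_of_nonneg_right
        · exact Finset.prod_le_one (fun j _ => (hq j).1) (fun j _ => (hq j).2)
        · exact Finset.prod_nonneg (fun j _ => (hq j).1)
    _ = _ := one_mul _

/-- **Sorting by `λ` is optimal** (Lemma 14 of the paper): given nonincreasing
`λ_1 ≥ … ≥ λ_n ≥ 0` and probabilities `p_i ∈ [0,1]`, the expected reward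
`Σ_i λ_i·(1 − p_i)·∏_{j<i} p_j` of a threshold stopping policy is maximized, over all
orderings `σ` of the pairs `(λ_i, p_i)`, by the identity ordering. -/
theorem sorting_by_lambda_optimal
    (n : ℕ) (hn : 0 < n) (lam p : Fin n → ℝ)
    (hanti : Antitone lam) (hlam : ∀ i, 0 ≤ lam i)
    (hp : ∀ i, p i ∈ Set.Icc (0:ℝ) 1)
    (σ : Equiv.Perm (Fin n)) :
    (∑ i : Fin n, lam (σ i) * (1 - p (σ i)) * ∏ j ∈ Finset.Iio i, p (σ j)) ≤
      ∑ i : Fin n, lam i * (1 - p i) * ∏ j ∈ Finset.Iio i, p j := by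
  classical
  -- extend `lam` to ℕ by zero, and define the "layer" weights `D`
  set lam' : ℕ → ℝ := fun k => if h : k < n then lam ⟨k, h⟩ else 0 with hlam'
  set D : ℕ → ℝ := fun k => lam' k - lam' (k + 1) with hD
  have hlamanti : ∀ k, lam' (k + 1) ≤ lam' k := by
    intro k
    by_cases h2 : k < n
    · by_cases h1 : k + 1 < n
      · simp only [hlam', dif_pos h1, dif_pos h2]
        exact hanti (show (⟨k, h2⟩ : Fin n) ≤ ⟨k + 1, h1⟩ from Nat.le_succ k)
      · simp only [hlam', dif_neg h1, dif_pos h2]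
        exact hlam _
    · have h1 : ¬ k + 1 < n := by omega
      simp [hlam', h1, h2]
  have hDnn : ∀ k, 0 ≤ D k := fun k => sub_nonneg.mpr (hlamanti k)
  -- layer-cake:  lam m = ∑_{k ∈ Ico m n} D k
  have hlayer : ∀ m : Fin n, lam m = ∑ k ∈ Finset.Ico m.1 n, D k := by
    intro m
    rw [Finset.sum_Ico_eq_sub _ m.2.le]
    have h1 : ∀ N, ∑ k ∈ Finset.range N, D k = lam' 0 - lam' N := by
      intro N; exact Finset.sum_range_sub' lam' N
    rw [h1, h1]
    have : lam' n = 0 := by simp [hlam']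
    have : lam' m.1 = lam m := by simp [hlam', m.2]
    simp_all
  -- the stopping-probability sums
  set A : Equiv.Perm (Fin n) → ℕ → ℝ := fun τ k =>
    ∑ i ∈ Finset.univ.filter (fun i => (τ i).1 ≤ k),
      (1 - p (τ i)) * ∏ j ∈ Finset.Iio i, p (τ j) with hA
  -- rewriting the reward via layers
  have hrew : ∀ τ : Equiv.Perm (Fin n),
      (∑ i : Fin n, lam (τ i) * (1 - p (τ i)) * ∏ j ∈ Finset.Iio i, p (τ j)) =
        ∑ k ∈ Finset.range n, D k * A τ k := by
    intro τ
    have step1 : ∀ i : Fin n,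
        lam (τ i) * (1 - p (τ i)) * ∏ j ∈ Finset.Iio i, p (τ j)
          = ∑ k ∈ Finset.range n,
              (if (τ i).1 ≤ k then D k * ((1 - p (τ i)) * ∏ j ∈ Finset.Iio i, p (τ j)) else 0) := by
      intro i
      rw [← Finset.sum_filter]
      have hset : (Finset.range n).filter (fun k => (τ i).1 ≤ k) = Finset.Ico (τ i).1 n := by
        ext k; simp only [mem_filter, mem_range, mem_Ico]; omega
      rw [hset, ← Finset.sum_mul, ← hlayer (τ i)]
      ring
    rw [Finset.sum_congr rfl (fun i _ => step1 i), Finset.sum_comm]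
    apply Finset.sum_congr rfl
    intro k _
    rw [Finset.sum_ite, Finset.sum_const_zero, add_zero, hA, Finset.mul_sum]
  rw [show (∑ i : Fin n, lam i * (1 - p i) * ∏ j ∈ Finset.Iio i, p j)
      = ∑ i : Fin n, lam ((1 : Equiv.Perm (Fin n)) i) * (1 - p ((1 : Equiv.Perm (Fin n)) i)) *
          ∏ j ∈ Finset.Iio i, p ((1 : Equiv.Perm (Fin n)) j) by simp,
    hrew σ, hrew 1]
  apply Finset.sum_le_sum
  intro k _
  apply mul_le_mul_of_nonneg_left _ (hDnn k)
  -- identity value of A equals `1 - ∏_{i ≤ k} p i`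
  set T' : Finset (Fin n) := Finset.univ.filter (fun i => i.1 ≤ k) with hT'
  have hid : A 1 k = 1 - ∏ j ∈ T', p j := by
    rw [hA]
    simp only [Equiv.Perm.coe_one, id_eq]
    rw [← telescope_aux p T']
    apply Finset.sum_congr rfl
    intro i hi
    congr 1
    apply Finset.prod_congr _ (fun _ _ => rfl)
    ext j
    simp only [hT', mem_filter, mem_Iio, mem_univ, true_and]
    constructor
    · intro hj
      exact ⟨le_trans (Nat.le_of_lt (Fin.lt_def.mp hj)) (mem_filter.mp hi).2, hj⟩
    · exact fun hj => hj.2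
  -- permuted value is at most that
  have hperm : A σ k ≤ 1 - ∏ j ∈ T', p j := by
    rw [hA]
    have := sum_le_aux (fun i => p (σ i)) (fun i => hp (σ i))
      (Finset.univ.filter (fun i => (σ i).1 ≤ k))
    refine this.trans (le_of_eq ?_)
    congr 1
    rw [← Finset.prod_image (f := p) (g := σ)
      (fun x _ y _ h => σ.injective h)]
    apply Finset.prod_congr _ (fun _ _ => rfl)
    ext m
    simp only [hT', mem_image, mem_filter, mem_univ, true_and]
    constructor
    · rintro ⟨i, hi, rfl⟩; exact hi
    · intro hm; exact ⟨σ.symm m, by simpa using hm, by simp⟩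
  rw [hid]; exact hperm
end

section
/- Let N ≥ 1, let λ_1 ≥ λ_2 ≥ … ≥ λ_N ≥ 0 be reals, and let p_1, …, p_N ∈ (0,1]. Then the function f : ℝ^N → ℝ defined by f(z) = Σ_{ℓ=1}^{N} λ_ℓ·(∏_{ℓ'=1}^{ℓ−1} p_{ℓ'}^{z_{ℓ'}} − ∏_{ℓ'=1}^{ℓ} p_{ℓ'}^{z_{ℓ'}}) is concave on ℝ^N. -/
noncomputable section

private lemma concaveOn_finset_sum {n : ℕ} {ι : Type*} (t : Finset ι)
    (f : ι → (Fin n → ℝ) → ℝ) (h : ∀ i ∈ t, ConcaveOn ℝ Set.univ (f i)) :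
    ConcaveOn ℝ Set.univ (fun z => ∑ i ∈ t, f i z) := by
  classical
  induction t using Finset.cons_induction with
  | empty => simpa using concaveOn_const (0 : ℝ) convex_univ
  | cons a s ha ih =>
      simp only [Finset.sum_cons]
      exact (h a (Finset.mem_cons_self a s)).add
        (ih fun i hi => h i (Finset.mem_cons_of_mem hi))

/-- **Concavity of the relaxation objective** (Lemma 16 of the paper): for
`λ_1 ≥ … ≥ λ_N ≥ 0` and `p_1, …, p_N ∈ (0,1]`, the function
`f(z) = Σ_ℓ λ_ℓ·(∏_{ℓ'<ℓ} p_{ℓ'}^{z_{ℓ'}} − ∏_{ℓ'≤ℓ} p_{ℓ'}^{z_{ℓ'}})`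
is concave on `ℝ^N` (here `p^z = exp(z·log p)` is the real power). -/
theorem relaxation_objective_concave
    (N : ℕ) (hN : 0 < N) (lam p : Fin N → ℝ)
    (hanti : Antitone lam) (hlam : ∀ i, 0 ≤ lam i)
    (hp : ∀ i, p i ∈ Set.Ioc (0:ℝ) 1) :
    ConcaveOn ℝ Set.univ (fun z : Fin N → ℝ =>
      ∑ l : Fin N, lam l *
        ((∏ l' ∈ Finset.Iio l, p l' ^ z l') - ∏ l' ∈ Finset.Iic l, p l' ^ z l')) := by
  classical
  -- extended lambda
  set L : ℕ → ℝ := fun i => if h : i < N then lam ⟨i, h⟩ else 0 with hLdef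
  -- partial products
  set C : ℕ → (Fin N → ℝ) → ℝ := fun m z =>
    ∏ l' ∈ Finset.univ.filter (fun l' : Fin N => (l' : ℕ) < m), p l' ^ z l' with hCdef
  -- C m as exponential of a linear function
  have hCexp : ∀ m z, C m z =
      Real.exp (∑ l' ∈ Finset.univ.filter (fun l' : Fin N => (l' : ℕ) < m),
        z l' * Real.log (p l')) := by
    intro m z
    rw [hCdef, Real.exp_sum]
    refine Finset.prod_congr rfl fun l' _ => ?_
    rw [Real.rpow_def_of_pos (hp l').1, mul_comm]
  have hCconv : ∀ m, ConvexOn ℝ Set.univ (C m) := by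
    intro m
    refine ⟨convex_univ, fun x _ y _ a b ha hb hab => ?_⟩
    simp only [hCexp]
    have hlin : (∑ l' ∈ Finset.univ.filter (fun l' : Fin N => (l' : ℕ) < m),
        (a • x + b • y) l' * Real.log (p l')) =
        a * (∑ l' ∈ Finset.univ.filter (fun l' : Fin N => (l' : ℕ) < m),
              x l' * Real.log (p l'))
        + b * (∑ l' ∈ Finset.univ.filter (fun l' : Fin N => (l' : ℕ) < m),
              y l' * Real.log (p l')) := by
      rw [Finset.mul_sum, Finset.mul_sum, ← Finset.sum_add_distrib]
      refine Finset.sum_congr rfl fun l' _ => ?_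
      simp only [Pi.add_apply, Pi.smul_apply, smul_eq_mul]
      ring
    rw [hlin]
    have := convexOn_exp.2 (Set.mem_univ
      (∑ l' ∈ Finset.univ.filter (fun l' : Fin N => (l' : ℕ) < m), x l' * Real.log (p l')))
      (Set.mem_univ
      (∑ l' ∈ Finset.univ.filter (fun l' : Fin N => (l' : ℕ) < m), y l' * Real.log (p l')))
      ha hb hab
    simpa using this
  -- building blocks are concave
  have hblock : ∀ (c : ℝ), 0 ≤ c → ∀ m,
      ConcaveOn ℝ Set.univ (fun z : Fin N → ℝ => c * (1 - C m z)) := by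
    intro c hc m
    have h1 : ConcaveOn ℝ Set.univ (fun z : Fin N → ℝ => 1 - C m z) := by
      have := ((hCconv m).neg.add (concaveOn_const (1 : ℝ) convex_univ))
      have e : (fun z : Fin N → ℝ => 1 - C m z) = -C m + fun _ => 1 := by
        funext z
        simp only [Pi.add_apply, Pi.neg_apply]
        ring
      rw [e]
      exact this
    have := h1.smul hc
    simpa [smul_eq_mul] using this
  -- rewrite the objective via summation by parts
  have key : (fun z : Fin N → ℝ =>
      ∑ l : Fin N, lam l *
        ((∏ l' ∈ Finset.Iio l, p l' ^ z l') - ∏ l' ∈ Finset.Iic l, p l' ^ z l')) =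
      (fun z : Fin N → ℝ => L (N - 1) * (1 - C N z)
        + ∑ i ∈ Finset.range (N - 1), (L i - L (i + 1)) * (1 - C (i + 1) z)) := by
    funext z
    have hIio : ∀ l : Fin N,
        Finset.Iio l = Finset.univ.filter (fun l' : Fin N => (l' : ℕ) < (l : ℕ)) := by
      intro l; ext l'
      simp only [Finset.mem_Iio, Finset.mem_filter, Finset.mem_univ, true_and, Fin.lt_def]
    have hIic : ∀ l : Fin N,
        Finset.Iic l = Finset.univ.filter (fun l' : Fin N => (l' : ℕ) < (l : ℕ) + 1) := by
      intro l; ext l'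
      simp only [Finset.mem_Iic, Finset.mem_filter, Finset.mem_univ, true_and, Fin.le_def, Nat.lt_succ_iff]
    have step1 : (∑ l : Fin N, lam l *
        ((∏ l' ∈ Finset.Iio l, p l' ^ z l') - ∏ l' ∈ Finset.Iic l, p l' ^ z l')) =
        ∑ i ∈ Finset.range N, L i • (C i z - C (i + 1) z) := by
      rw [← Fin.sum_univ_eq_sum_range (fun i => L i • (C i z - C (i + 1) z)) N]
      refine Finset.sum_congr rfl fun l _ => ?_
      have hLl : L (l : ℕ) = lam l := by simp [hLdef, l.isLt]
      rw [smul_eq_mul, hLl, hIio l, hIic l]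
    have hPS : ∀ m : ℕ, (∑ j ∈ Finset.range m, (C j z - C (j + 1) z)) = 1 - C m z := by
      intro m
      rw [Finset.sum_range_sub' (fun j => C j z) m]
      congr 1
      simp [hCdef]
    rw [step1, Finset.sum_range_by_parts L (fun i => C i z - C (i + 1) z) N]
    simp only [smul_eq_mul, hPS]
    rw [sub_eq_add_neg, ← Finset.sum_neg_distrib]
    congr 1
    refine Finset.sum_congr rfl fun i _ => ?_
    ring
  rw [key]
  refine (hblock (L (N - 1)) ?_ N).add
    (concaveOn_finset_sum _ _ fun i hi => hblock (L i - L (i + 1)) ?_ (i + 1))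
  · have h1 : N - 1 < N := Nat.sub_lt hN one_pos
    simp only [hLdef, dif_pos h1]
    exact hlam _
  · have hi' : i + 1 < N := by
      have := Finset.mem_range.mp hi
      omega
    have hi'' : i < N := by omega
    simp only [hLdef, dif_pos hi', dif_pos hi'']
    have := hanti (show (⟨i, hi''⟩ : Fin N) ≤ ⟨i + 1, hi'⟩ by simp [Fin.le_def])
    linarith
end
end

section
/- There is a universal constant C > 0 with the following property. Let ε ∈ (0,1), let n, c ≥ 1, and for each i ∈ {1,…,n}, j ∈ {0,…,c} let p_{i,j} ∈ [1−ε, 1], λ_{i,j} ≥ 0, and z_{i,j} ∈ [0,1] with Σ_{j=0}^{c} z_{i,j} = 1 for each i. Let r be a bijection from {1,…,n(c+1)} to the index pairs such that λ_{r(1)} ≥ λ_{r(2)} ≥ … ≥ λ_{r(n(c+1))}. For x ∈ [0,1]^{n×(c+1)} define Obj(x) = Σ_{ℓ=1}^{n(c+1)} λ_{r(ℓ)}·(∏_{ℓ'=1}^{ℓ−1} p_{r(ℓ')}^{x_{r(ℓ')}} − ∏_{ℓ'=1}^{ℓ} p_{r(ℓ')}^{x_{r(ℓ')}}). Let J_1,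 …, J_n be independent random variables with P[J_i = j] = z_{i,j}, and set Z_{i,j} = 1{J_i = j}. Then E[Obj(Z)] ≥ (1 − Cε)·Obj(z). -/
open MeasureTheory ProbabilityTheory

noncomputable section

private lemma abel_aux (lam d : ℕ → ℝ) (hmono : ∀ m, lam (m + 1) ≤ lam m)
    (hd0 : d 0 = 0) (hd : ∀ m, 0 ≤ d m) (N : ℕ) :
    lam N * d N ≤ ∑ m ∈ Finset.range N, lam m * (d (m + 1) - d m) := by
  induction N with
  | zero => simp [hd0]
  | succ N ih =>
      rw [Finset.sum_range_succ]
      have h1 : lam (N + 1) * d (N + 1) ≤ lam N * d (N + 1) :=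
        mul_le_mul_of_nonneg_right (hmono N) (hd _)
      have h2 : lam N * (d (N + 1) - d N) = lam N * d (N + 1) - lam N * d N := by ring
      linarith

private lemma analytic_aux {ε : ℝ} (hε0 : 0 < ε) (hε1 : ε < 1) {n : ℕ}
    (u v : Fin n → ℝ) (huε : ∀ i, u i ≤ ε)
    (huv : ∀ i, (1 - ε) * v i ≤ u i) :
    (1 - ε) * (1 - Real.exp (-(∑ i, v i))) ≤ 1 - ∏ i, (1 - u i) := by
  have h1 : ∏ i, (1 - u i) ≤ Real.exp (-(∑ i, u i)) := by
    rw [← Finset.sum_neg_distrib, Real.exp_sum]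
    refine Finset.prod_le_prod (fun i _ => by linarith [huε i]) (fun i _ => ?_)
    have := Real.add_one_le_exp (-u i)
    linarith
  have h2 : Real.exp (-(∑ i, u i)) ≤ Real.exp (-((1 - ε) * ∑ i, v i)) := by
    apply Real.exp_le_exp.2
    have : (1 - ε) * ∑ i, v i ≤ ∑ i, u i := by
      rw [Finset.mul_sum]
      exact Finset.sum_le_sum fun i _ => huv i
    linarith
  have h3 : Real.exp (-((1 - ε) * ∑ i, v i)) ≤ (1 - ε) * Real.exp (-(∑ i, v i)) + ε := by
    have hc := convexOn_exp.2 (Set.mem_univ (-(∑ i, v i))) (Set.mem_univ 0)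
      (by linarith : (0:ℝ) ≤ 1 - ε) hε0.le (by ring)
    simp only [smul_eq_mul, mul_zero, add_zero, Real.exp_zero, mul_one] at hc
    calc Real.exp (-((1 - ε) * ∑ i, v i)) = Real.exp ((1 - ε) * -(∑ i, v i)) := by ring_nf
      _ ≤ (1 - ε) * Real.exp (-(∑ i, v i)) + ε := by linarith [hc]
  linarith

private lemma prod_group {n c : ℕ} (T : Finset (Fin n × Fin (c + 1)))
    (f : Fin n × Fin (c + 1) → ℝ) :
    ∏ q ∈ T, f q = ∏ i, ∏ j ∈ Finset.univ.filter (fun j => (i, j) ∈ T), f (i, j) := by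
  classical
  have h : ∏ q ∈ T, f q = ∏ q : Fin n × Fin (c + 1), if q ∈ T then f q else 1 := by
    rw [Finset.prod_ite_mem Finset.univ T f, Finset.univ_inter]
  rw [h, Fintype.prod_prod_type]
  exact Finset.prod_congr rfl fun i _ => (Finset.prod_filter _ _).symm

private lemma sum_group {n c : ℕ} (T : Finset (Fin n × Fin (c + 1)))
    (f : Fin n × Fin (c + 1) → ℝ) :
    ∑ q ∈ T, f q = ∑ i, ∑ j ∈ Finset.univ.filter (fun j => (i, j) ∈ T), f (i, j) := by
  classical
  have h : ∑ q ∈ T, f q = ∑ q : Fin n × Fin (c + 1), if q ∈ T then f q else 0 := by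
    rw [Finset.sum_ite_mem Finset.univ T f, Finset.univ_inter]
  rw [h, Fintype.sum_prod_type]
  exact Finset.sum_congr rfl fun i _ => (Finset.sum_filter _ _).symm

private lemma integral_prod_of_indep {Ω : Type} [MeasurableSpace Ω] {μ : Measure Ω}
    [IsProbabilityMeasure μ] {ι : Type*} {X : ι → Ω → ℝ}
    (hX : @iIndepFun _ _ _ _ (fun _ => (inferInstance : MeasurableSpace ℝ)) X μ)
    (hmeas : ∀ i, Measurable (X i)) (s : Finset ι) :
    ∫ ω, ∏ i ∈ s, X i ω ∂μ = ∏ i ∈ s, ∫ ω, X i ω ∂μ := by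
  classical
  induction s using Finset.induction_on with
  | empty => simp
  | insert i s hi ih =>
      have hindep : IndepFun (∏ j ∈ s, X j) (X i) μ :=
        hX.indepFun_finset_prod_of_notMem hmeas hi
      have h1 : ∫ ω, ∏ j ∈ insert i s, X j ω ∂μ
          = ∫ ω, (∏ j ∈ s, X j) ω * X i ω ∂μ := by
        refine integral_congr_ae (Filter.Eventually.of_forall fun ω => ?_)
        simp only [Finset.prod_insert hi, Finset.prod_apply]
        ring
      have hPmeas : AEStronglyMeasurable (∏ j ∈ s, X j) μ := by
        have : Measurable (∏ j ∈ s, X j) := by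
          rw [show (∏ j ∈ s, X j) = fun ω => ∏ j ∈ s, X j ω from funext fun ω =>
            Finset.prod_apply ω s X]
          exact Finset.measurable_prod s fun j _ => hmeas j
        exact this.aestronglyMeasurable
      rw [h1, hindep.integral_fun_mul_eq_mul_integral hPmeas (hmeas i).aestronglyMeasurable,
        Finset.prod_insert hi]
      have h2 : ∫ ω, (∏ j ∈ s, X j) ω ∂μ = ∏ j ∈ s, ∫ ω, X j ω ∂μ := by
        rw [← ih]
        exact integral_congr_ae (Filter.Eventually.of_forall fun ω => by
          rw [Finset.prod_apply])
      rw [h2]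
      ring

private lemma partition_nullMeasurable {Ω : Type} [MeasurableSpace Ω] {μ : Measure Ω}
    [IsProbabilityMeasure μ] {m : ℕ} (f : Ω → Fin (m + 1))
    (hsum : ∑ j, (μ (f ⁻¹' {j})).toReal = 1) (j : Fin (m + 1)) :
    NullMeasurableSet (f ⁻¹' {j}) μ := by
  classical
  set E : Fin (m + 1) → Set Ω := fun j => f ⁻¹' {j} with hE
  set H : Fin (m + 1) → Set Ω := fun j => toMeasurable μ (E j) with hH
  have hEH : ∀ j, E j ⊆ H j := fun j => subset_toMeasurable μ _
  have hHmeas : ∀ j, MeasurableSet (H j) := fun j => measurableSet_toMeasurable μ _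
  have hHm : ∀ j, μ (H j) = μ (E j) := fun j => measure_toMeasurable _
  have hmem : ∀ ω, ω ∈ E (f ω) := fun ω => rfl
  have hsumH : ∑ l, μ (H l) = 1 := by
    have h2 : (∑ l, μ (E l)).toReal = 1 := by
      rw [ENNReal.toReal_sum (fun l _ => measure_ne_top μ _)]; exact hsum
    have h3 : ∑ l, μ (E l) = 1 := by
      have hne : ∑ l, μ (E l) ≠ ⊤ :=
        (ENNReal.sum_lt_top.2 fun l _ => measure_lt_top μ _).ne
      rw [← ENNReal.ofReal_toReal hne, h2]; simp
    simp_rw [hHm]; exact h3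
  have hnull : ∀ k, k ≠ j → μ (H j ∩ H k) = 0 := by
    intro k hkj
    have hjk : j ≠ k := hkj.symm
    have hsub : (Set.univ : Set Ω) ⊆
        (H j ∪ H k) ∪ ⋃ l ∈ ((Finset.univ \ {j, k} : Finset (Fin (m + 1))) :
          Set (Fin (m + 1))), H l := by
      intro ω _
      by_cases hc : f ω = j ∨ f ω = k
      · left
        rcases hc with h | h
        · exact Or.inl (hEH j (h ▸ hmem ω))
        · exact Or.inr (hEH k (h ▸ hmem ω))
      · right
        push_neg at hc
        refine Set.mem_biUnion ?_ (hEH (f ω) (hmem ω))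
        simp [hc.1, hc.2]
    have h1 : (1 : ENNReal) ≤ μ (H j ∪ H k) + ∑ l ∈ Finset.univ \ {j, k}, μ (H l) := by
      calc (1 : ENNReal) = μ (Set.univ : Set Ω) := (measure_univ).symm
        _ ≤ μ ((H j ∪ H k) ∪ ⋃ l ∈ ((Finset.univ \ {j, k} : Finset (Fin (m + 1))) :
              Set (Fin (m + 1))), H l) := measure_mono hsub
        _ ≤ μ (H j ∪ H k) + μ (⋃ l ∈ ((Finset.univ \ {j, k} : Finset (Fin (m + 1))) :
              Set (Fin (m + 1))), H l) := measure_union_le _ _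
        _ ≤ μ (H j ∪ H k) + ∑ l ∈ Finset.univ \ {j, k}, μ (H l) := by
            gcongr
            exact measure_biUnion_finset_le _ _
    have h2 : μ (H j ∪ H k) + μ (H j ∩ H k) = μ (H j) + μ (H k) :=
      measure_union_add_inter _ (hHmeas k)
    have h3 : (μ (H j) + μ (H k)) + ∑ l ∈ Finset.univ \ {j, k}, μ (H l) = 1 := by
      have hp : μ (H j) + μ (H k) = ∑ l ∈ ({j, k} : Finset (Fin (m + 1))), μ (H l) :=
        (Finset.sum_pair (f := fun l => μ (H l)) hjk).symm
      rw [hp, add_comm, Finset.sum_sdiff (Finset.subset_univ _)]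
      exact hsumH
    have h4 : (1 : ENNReal) + μ (H j ∩ H k) ≤ 1 + 0 := by
      calc (1 : ENNReal) + μ (H j ∩ H k)
          ≤ (μ (H j ∪ H k) + ∑ l ∈ Finset.univ \ {j, k}, μ (H l)) + μ (H j ∩ H k) := by
            gcongr
        _ = (μ (H j ∪ H k) + μ (H j ∩ H k)) + ∑ l ∈ Finset.univ \ {j, k}, μ (H l) := by ring
        _ = (μ (H j) + μ (H k)) + ∑ l ∈ Finset.univ \ {j, k}, μ (H l) := by rw [h2]
        _ = 1 + 0 := by rw [h3, add_zero]
    have := (ENNReal.add_le_add_iff_left (by norm_num : (1 : ENNReal) ≠ ⊤)).1 h4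
    exact le_antisymm this zero_le
  set Nbad : Set Ω := ⋃ k ∈ {k : Fin (m + 1) | k ≠ j}, H j ∩ H k with hNbad
  have hNbadnull : μ Nbad = 0 := by
    refine (measure_biUnion_null_iff (Set.to_countable _)).2 ?_
    intro k hk
    exact hnull k hk
  set K : Set Ω := H j \ ⋃ k ∈ {k : Fin (m + 1) | k ≠ j}, H k with hK
  have hKmeas : MeasurableSet K :=
    (hHmeas j).diff (MeasurableSet.biUnion (Set.to_countable _) fun k _ => hHmeas k)
  have hKE : K ⊆ E j := by
    intro ω hω
    rcases hω with ⟨hωj, hωn⟩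
    by_contra hne
    have hfωj : f ω ≠ j := fun h => hne (h ▸ hmem ω)
    exact hωn (Set.mem_biUnion hfωj (hEH (f ω) (hmem ω)))
  have hEK : E j \ K ⊆ Nbad := by
    intro ω hω
    rcases hω with ⟨hωE, hωK⟩
    have hωj : ω ∈ H j := hEH j hωE
    have : ω ∈ ⋃ k ∈ {k : Fin (m + 1) | k ≠ j}, H k := by
      by_contra hcon
      exact hωK ⟨hωj, hcon⟩
    rcases Set.mem_iUnion₂.1 this with ⟨k, hk, hωk⟩
    exact Set.mem_biUnion hk ⟨hωj, hωk⟩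
  have hae : K =ᵐ[μ] E j := by
    rw [Filter.eventuallyEq_set]
    filter_upwards [measure_eq_zero_iff_ae_notMem.1 hNbadnull] with ω hω
    constructor
    · exact fun h => hKE h
    · intro h
      by_contra hcon
      exact hω (hEK ⟨h, hcon⟩)
  exact hKmeas.nullMeasurableSet.congr hae

/-- The objective of the convex-programming relaxation of the threshold-assignment problem:
`Obj(x) = Σ_ℓ λ_{r(ℓ)}·(∏_{ℓ'<ℓ} p_{r(ℓ')}^{x_{r(ℓ')}} − ∏_{ℓ'≤ℓ} p_{r(ℓ')}^{x_{r(ℓ')}})`,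
where `r` enumerates the variable/threshold pairs in nonincreasing order of `λ` and
`p^x = exp(x·log p)` is the real power. -/
def roundingObj {n c : ℕ} (p lam : Fin n × Fin (c + 1) → ℝ)
    (r : Fin (n * (c + 1)) ≃ Fin n × Fin (c + 1))
    (x : Fin n × Fin (c + 1) → ℝ) : ℝ :=
  ∑ l : Fin (n * (c + 1)), lam (r l) *
    ((∏ l' ∈ Finset.Iio l, p (r l') ^ x (r l')) - ∏ l' ∈ Finset.Iic l, p (r l') ^ x (r l'))

private lemma obj_eq_sum {n c : ℕ} (p lam : Fin n × Fin (c + 1) → ℝ)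
    (r : Fin (n * (c + 1)) ≃ Fin n × Fin (c + 1)) (x : Fin n × Fin (c + 1) → ℝ) :
    roundingObj p lam r x = ∑ m ∈ Finset.range (n * (c + 1)),
      (if h : m < n * (c + 1) then lam (r ⟨m, h⟩) else 0) *
        ((∏ q ∈ (Finset.univ.filter (fun l : Fin (n * (c + 1)) => l.1 < m)).image r,
            p q ^ x q) -
         ∏ q ∈ (Finset.univ.filter (fun l : Fin (n * (c + 1)) => l.1 < m + 1)).image r,
            p q ^ x q) := by
  classical
  rw [← Fin.sum_univ_eq_sum_range (fun m =>
    (if h : m < n * (c + 1) then lam (r ⟨m, h⟩) else 0) *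
      ((∏ q ∈ (Finset.univ.filter (fun l : Fin (n * (c + 1)) => l.1 < m)).image r,
          p q ^ x q) -
       ∏ q ∈ (Finset.univ.filter (fun l : Fin (n * (c + 1)) => l.1 < m + 1)).image r,
          p q ^ x q))]
  unfold roundingObj
  refine Finset.sum_congr rfl fun l _ => ?_
  have hIio : Finset.Iio l = Finset.univ.filter (fun l' : Fin (n * (c + 1)) => l'.1 < l.1) := by
    ext l'
    simp only [Finset.mem_Iio, Finset.mem_filter, Finset.mem_univ, true_and]
    exact Iff.rfl
  have hIic : Finset.Iic l =
      Finset.univ.filter (fun l' : Fin (n * (c + 1)) => l'.1 < l.1 + 1) := by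
    ext l'
    simp only [Finset.mem_Iic, Finset.mem_filter, Finset.mem_univ, true_and]
    exact Nat.lt_succ_iff.symm
  have h1 : ∀ m : ℕ, ∏ q ∈ (Finset.univ.filter
        (fun l' : Fin (n * (c + 1)) => l'.1 < m)).image r, p q ^ x q
      = ∏ l' ∈ Finset.univ.filter (fun l' : Fin (n * (c + 1)) => l'.1 < m),
          p (r l') ^ x (r l') := fun m =>
    Finset.prod_image (fun a _ b _ h => r.injective h)
  rw [h1, h1, dif_pos l.isLt, Fin.eta, hIio, hIic]

/-- **Randomized rounding** (Lemma 15 of the paper): there is a universal constant `C > 0`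
such that for every `ε ∈ (0,1)`, every fractional assignment `z` of variables to thresholds
(with all `p_{i,j} ∈ [1−ε,1]`, `λ` nonnegative and sorted by the bijection `r`), and every
independent randomized rounding `J` of `z` (with `P[J_i = j] = z_{i,j}` and
`Z_{i,j} = 1{J_i = j}`), one has `E[Obj(Z)] ≥ (1 − Cε)·Obj(z)`. -/
theorem randomized_rounding :
    ∃ C : ℝ, 0 < C ∧
      ∀ ε : ℝ, ε ∈ Set.Ioo (0:ℝ) 1 →
      ∀ n c : ℕ, 0 < n → 0 < c →
      ∀ p lam : Fin n × Fin (c + 1) → ℝ,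
        (∀ q, p q ∈ Set.Icc (1 - ε) 1) →
        (∀ q, 0 ≤ lam q) →
      ∀ z : Fin n × Fin (c + 1) → ℝ,
        (∀ q, z q ∈ Set.Icc (0:ℝ) 1) →
        (∀ i : Fin n, ∑ j : Fin (c + 1), z (i, j) = 1) →
      ∀ r : Fin (n * (c + 1)) ≃ Fin n × Fin (c + 1),
        (∀ a b : Fin (n * (c + 1)), a ≤ b → lam (r b) ≤ lam (r a)) →
      ∀ (Ω : Type) (_ : MeasurableSpace Ω) (μ : Measure Ω), IsProbabilityMeasure μ →
      ∀ J : Fin n → Ω → Fin (c + 1),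
        @iIndepFun _ _ _ _ (fun _ => (⊤ : MeasurableSpace (Fin (c + 1)))) J μ →
        (∀ i j, (μ {ω | J i ω = j}).toReal = z (i, j)) →
        (1 - C * ε) * roundingObj p lam r z ≤
          ∫ ω, roundingObj p lam r (fun q => if J q.1 ω = q.2 then 1 else 0) ∂μ := by
  classical
  refine ⟨1, one_pos, ?_⟩
  rintro ε ⟨hε0, hε1⟩ n c hn hc p lam hp hlam z hz hzsum r hsort Ω mΩ μ hμ J hindep hmarg
  haveI : IsProbabilityMeasure μ := hμ
  have hp0 : ∀ q, 0 < p q := fun q => by have := (hp q).1; linarith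
  -- Step 1: measurable modifications of the J i
  have haem : ∀ i, AEMeasurable (J i) μ := by
    intro i
    have hsum1 : ∑ j, (μ (J i ⁻¹' {j})).toReal = 1 := by
      have h1 : ∀ j, (μ (J i ⁻¹' {j})).toReal = z (i, j) := fun j => hmarg i j
      simp_rw [h1]
      exact hzsum i
    have hNM : NullMeasurable (J i) μ := by
      intro s _
      have hset : J i ⁻¹' s = ⋃ j ∈ s, J i ⁻¹' {j} := by
        ext ω; simp
      rw [hset]
      exact NullMeasurableSet.biUnion (Set.to_countable s) fun j _ =>
        partition_nullMeasurable (J i) hsum1 j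
    exact hNM.aemeasurable
  set J' : Fin n → Ω → Fin (c + 1) := fun i => (haem i).mk (J i) with hJ'
  have hJ'meas : ∀ i, Measurable (J' i) := fun i => (haem i).measurable_mk
  have hJae : ∀ i, J i =ᵐ[μ] J' i := fun i => (haem i).ae_eq_mk
  have hall : ∀ᵐ ω ∂μ, ∀ i, J i ω = J' i ω := ae_all_iff.2 hJae
  have hmarg' : ∀ i j, (μ (J' i ⁻¹' {j})).toReal = z (i, j) := by
    intro i j
    have hset : (J i ⁻¹' {j} : Set Ω) =ᵐ[μ] J' i ⁻¹' {j} := by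
      rw [Filter.eventuallyEq_set]
      filter_upwards [hJae i] with ω hω
      simp [Set.mem_preimage, hω]
    rw [← measure_congr hset]
    exact hmarg i j
  have hindep' : @iIndepFun _ _ _ _ (fun _ => (⊤ : MeasurableSpace (Fin (c + 1)))) J' μ := by
    rw [iIndepFun_iff_measure_inter_preimage_eq_mul] at hindep ⊢
    intro S sets hsets
    have hone : ∀ i, μ (J' i ⁻¹' sets i) = μ (J i ⁻¹' sets i) := by
      intro i
      refine measure_congr ?_
      rw [Filter.eventuallyEq_set]
      filter_upwards [hJae i] with ω hω
      simp [Set.mem_preimage, hω]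
    have hint : μ (⋂ i ∈ S, J' i ⁻¹' sets i) = μ (⋂ i ∈ S, J i ⁻¹' sets i) := by
      refine measure_congr ?_
      rw [Filter.eventuallyEq_set]
      filter_upwards [hall] with ω hω
      simp only [Set.mem_iInter, Set.mem_preimage]
      exact ⟨fun h i hi => (hω i) ▸ h i hi, fun h i hi => (hω i).symm ▸ h i hi⟩
    rw [hint, hindep S hsets]
    exact Finset.prod_congr rfl fun i _ => (hone i).symm
  -- Step 2: definitions
  set T : ℕ → Finset (Fin n × Fin (c + 1)) := fun m =>
    (Finset.univ.filter (fun l : Fin (n * (c + 1)) => l.1 < m)).image r with hT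
  set u : ℕ → Fin n → ℝ := fun m i =>
    ∑ j ∈ Finset.univ.filter (fun j => (i, j) ∈ T m), z (i, j) * (1 - p (i, j)) with hu
  set v : ℕ → Fin n → ℝ := fun m i =>
    -∑ j ∈ Finset.univ.filter (fun j => (i, j) ∈ T m),
      z (i, j) * Real.log (p (i, j)) with hv
  set a : ℕ → ℝ := fun m => ∏ i, (1 - u m i) with ha
  set b : ℕ → ℝ := fun m => ∏ q ∈ T m, p q ^ z q with hb
  set Λ : ℕ → ℝ := fun m => if h : m < n * (c + 1) then lam (r ⟨m, h⟩) else 0 with hΛ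
  set d : ℕ → ℝ := fun m => (1 - a m) - (1 - ε) * (1 - b m) with hd
  set V : ℕ → Ω → ℝ := fun m ω => ∏ q ∈ T m, (if J' q.1 ω = q.2 then p q else 1) with hV
  -- Step 3: key analytic inequality
  have hkey : ∀ m, (1 - ε) * (1 - b m) ≤ 1 - a m := by
    intro m
    have hb_exp : b m = Real.exp (-(∑ i, v m i)) := by
      rw [hb]
      calc (∏ q ∈ T m, p q ^ z q)
          = ∏ q ∈ T m, Real.exp (Real.log (p q) * z q) :=
            Finset.prod_congr rfl fun q _ => Real.rpow_def_of_pos (hp0 q) _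
        _ = Real.exp (∑ q ∈ T m, Real.log (p q) * z q) := (Real.exp_sum _ _).symm
        _ = Real.exp (-(∑ i, v m i)) := by
            rw [sum_group (T m) (fun q => Real.log (p q) * z q)]
            congr 1
            rw [hv, ← Finset.sum_neg_distrib]
            refine Finset.sum_congr rfl fun i _ => ?_
            rw [neg_neg]
            exact Finset.sum_congr rfl fun j _ => mul_comm _ _
    have := analytic_aux hε0 hε1 (u m) (v m) ?_ ?_
    · rw [ha, hb_exp]
      exact this
    · intro i
      rw [hu]
      calc (∑ j ∈ Finset.univ.filter (fun j => (i, j) ∈ T m), z (i, j) * (1 - p (i, j)))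
          ≤ ∑ j ∈ Finset.univ.filter (fun j => (i, j) ∈ T m), z (i, j) * ε :=
            Finset.sum_le_sum fun j _ => mul_le_mul_of_nonneg_left
              (by linarith [(hp (i, j)).1]) (hz (i, j)).1
        _ ≤ ∑ j, z (i, j) * ε :=
            Finset.sum_le_sum_of_subset_of_nonneg (Finset.filter_subset _ _)
              (fun j _ _ => mul_nonneg (hz (i, j)).1 hε0.le)
        _ = ε := by rw [← Finset.sum_mul, hzsum i, one_mul]
    · intro i
      have hexp : (1 - ε) * v m i = ∑ j ∈ Finset.univ.filter (fun j => (i, j) ∈ T m),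
          (1 - ε) * -(z (i, j) * Real.log (p (i, j))) := by
        rw [hv]
        dsimp only
        simp only [mul_neg]
        rw [Finset.sum_neg_distrib, Finset.mul_sum]
      rw [hexp, hu]
      refine Finset.sum_le_sum fun j _ => ?_
      have hq1 := (hp (i, j)).1
      have hq2 := (hp (i, j)).2
      have hz1 := (hz (i, j)).1
      have hlognn : 0 ≤ -Real.log (p (i, j)) := by
        have := Real.log_nonpos (hp0 (i, j)).le hq2
        linarith
      have hL : p (i, j) * -Real.log (p (i, j)) ≤ 1 - p (i, j) := by
        have h := Real.log_le_sub_one_of_pos (inv_pos.2 (hp0 (i, j)))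
        rw [Real.log_inv] at h
        have h2 := mul_le_mul_of_nonneg_left h (hp0 (i, j)).le
        rw [mul_sub, mul_inv_cancel₀ (hp0 (i, j)).ne', mul_one] at h2
        linarith
      have hstep : (1 - ε) * -Real.log (p (i, j)) ≤ 1 - p (i, j) := by
        have := mul_le_mul_of_nonneg_right hq1 hlognn
        linarith
      calc (1 - ε) * -(z (i, j) * Real.log (p (i, j)))
          = z (i, j) * ((1 - ε) * -Real.log (p (i, j))) := by ring
        _ ≤ z (i, j) * (1 - p (i, j)) := mul_le_mul_of_nonneg_left hstep hz1
  -- Step 4: d facts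
  have hd0 : d 0 = 0 := by
    have hT0 : T 0 = ∅ := by
      rw [hT]
      simp
    rw [hd, ha, hb, hu]
    simp [hT0]
  have hdnn : ∀ m, 0 ≤ d m := by
    intro m
    have := hkey m
    rw [hd]
    dsimp only
    linarith
  have hΛnn : ∀ m, 0 ≤ Λ m := by
    intro m
    rw [hΛ]
    dsimp only
    split
    · exact hlam _
    · exact le_refl 0
  have hΛmono : ∀ m, Λ (m + 1) ≤ Λ m := by
    intro m
    rw [hΛ]
    dsimp only
    by_cases h1 : m + 1 < n * (c + 1)
    · have h0 : m < n * (c + 1) := Nat.lt_of_succ_lt h1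
      rw [dif_pos h1, dif_pos h0]
      exact hsort ⟨m, h0⟩ ⟨m + 1, h1⟩ (by simp [Fin.mk_le_mk])
    · rw [dif_neg h1]
      by_cases h0 : m < n * (c + 1)
      · rw [dif_pos h0]; exact hlam _
      · rw [dif_neg h0]
  -- Step 5: properties of V
  have hVmeas : ∀ m, Measurable (V m) := by
    intro m
    rw [hV]
    exact Finset.measurable_prod (T m) fun q _ =>
      (measurable_from_top (f := fun y : Fin (c + 1) => if y = q.2 then p q else 1)).comp
        (hJ'meas q.1)
  have hVbdd : ∀ m ω, 0 ≤ V m ω ∧ V m ω ≤ 1 := by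
    intro m ω
    rw [hV]
    constructor
    · refine Finset.prod_nonneg fun q _ => ?_
      split
      · exact (hp0 q).le
      · norm_num
    · refine Finset.prod_le_one (fun q _ => ?_) (fun q _ => ?_)
      · split
        · exact (hp0 q).le
        · norm_num
      · split
        · exact (hp q).2
        · exact le_refl 1
  have hVintg : ∀ m, Integrable (V m) μ := by
    intro m
    refine (integrable_const (1:ℝ)).mono' (hVmeas m).aestronglyMeasurable ?_
    exact Filter.Eventually.of_forall fun ω => by
      rw [Real.norm_eq_abs, abs_of_nonneg (hVbdd m ω).1]; exact (hVbdd m ω).2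
  -- Step 6: the expectation of V m is a m
  have hVint : ∀ m, ∫ ω, V m ω ∂μ = a m := by
    intro m
    set X : Fin n → Ω → ℝ := fun i ω =>
      ∏ j ∈ Finset.univ.filter (fun j => (i, j) ∈ T m),
        (if J' i ω = j then p (i, j) else 1) with hX
    have hVX : ∀ ω, V m ω = ∏ i, X i ω := by
      intro ω
      rw [hV, hX]
      exact prod_group (T m) (fun q => if J' q.1 ω = q.2 then p q else 1)
    have hXmeas : ∀ i, Measurable (X i) := by
      intro i
      rw [hX]
      exact (measurable_from_top (f := fun y : Fin (c + 1) =>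
        ∏ j ∈ Finset.univ.filter (fun j => (i, j) ∈ T m),
          (if y = j then p (i, j) else 1))).comp (hJ'meas i)
    have hXindep : @iIndepFun _ _ _ _ (fun _ => (inferInstance : MeasurableSpace ℝ)) X μ := by
      have := hindep'.comp (fun i => fun y : Fin (c + 1) =>
        ∏ j ∈ Finset.univ.filter (fun j => (i, j) ∈ T m),
          (if y = j then p (i, j) else 1)) (fun i => measurable_from_top)
      exact this
    have hXint : ∀ i, ∫ ω, X i ω ∂μ = 1 - u m i := by
      intro i
      haveI : IsProbabilityMeasure (μ.map (J' i)) :=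
        Measure.isProbabilityMeasure_map (hJ'meas i).aemeasurable
      have h1 : ∫ y, (∏ j ∈ Finset.univ.filter (fun j => (i, j) ∈ T m),
          (if y = j then p (i, j) else 1)) ∂(μ.map (J' i)) = ∫ ω, X i ω ∂μ :=
        integral_map (φ := J' i) (hJ'meas i).aemeasurable
          measurable_from_top.aestronglyMeasurable
      rw [← h1, integral_fintype (Integrable.of_finite)]
      have h2 : ∀ y : Fin (c + 1),
          (∏ j ∈ Finset.univ.filter (fun j => (i, j) ∈ T m), (if y = j then p (i, j) else 1))
          = if y ∈ Finset.univ.filter (fun j => (i, j) ∈ T m) then p (i, y) else 1 :=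
        fun y => Finset.prod_ite_eq _ y _
      have h3 : ∀ y : Fin (c + 1), (μ.map (J' i)).real {y} = z (i, y) := by
        intro y
        rw [Measure.real, Measure.map_apply (hJ'meas i) (measurableSet_singleton y)]
        exact hmarg' i y
      simp_rw [h2, h3, smul_eq_mul]
      have h4 : ∀ y : Fin (c + 1),
          z (i, y) * (if y ∈ Finset.univ.filter (fun j => (i, j) ∈ T m) then p (i, y) else 1)
          = z (i, y) - (if y ∈ Finset.univ.filter (fun j => (i, j) ∈ T m)
              then z (i, y) * (1 - p (i, y)) else 0) := by
        intro y
        split <;> ring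
      rw [Finset.sum_congr rfl fun y _ => h4 y, Finset.sum_sub_distrib, hzsum i,
        Finset.sum_ite_mem, Finset.univ_inter, hu]
    calc ∫ ω, V m ω ∂μ = ∫ ω, ∏ i, X i ω ∂μ :=
          integral_congr_ae (Filter.Eventually.of_forall hVX)
      _ = ∏ i, ∫ ω, X i ω ∂μ := integral_prod_of_indep hXindep hXmeas Finset.univ
      _ = a m := by
          rw [ha]
          exact Finset.prod_congr rfl fun i _ => hXint i
  -- Step 7: both sides as sums
  have hLHS : roundingObj p lam r z = ∑ m ∈ Finset.range (n * (c + 1)),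
      Λ m * (b m - b (m + 1)) := by
    rw [obj_eq_sum p lam r z]
  have hRHS : ∫ ω, roundingObj p lam r (fun q => if J q.1 ω = q.2 then 1 else 0) ∂μ
      = ∑ m ∈ Finset.range (n * (c + 1)), Λ m * (a m - a (m + 1)) := by
    have h1 : ∀ ω, roundingObj p lam r (fun q => if J' q.1 ω = q.2 then 1 else 0)
        = ∑ m ∈ Finset.range (n * (c + 1)), Λ m * (V m ω - V (m + 1) ω) := by
      intro ω
      rw [obj_eq_sum p lam r _]
      refine Finset.sum_congr rfl fun m _ => ?_
      have hpr : ∀ m' : ℕ, (∏ q ∈ T m', p q ^ (if J' q.1 ω = q.2 then (1:ℝ) else 0))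
          = V m' ω := by
        intro m'
        rw [hV]
        refine Finset.prod_congr rfl fun q _ => ?_
        split_ifs with h
        · exact Real.rpow_one _
        · exact Real.rpow_zero _
      rw [hpr m, hpr (m + 1)]
    have h2 : ∫ ω, roundingObj p lam r (fun q => if J q.1 ω = q.2 then 1 else 0) ∂μ
        = ∫ ω, roundingObj p lam r (fun q => if J' q.1 ω = q.2 then 1 else 0) ∂μ := by
      refine integral_congr_ae ?_
      filter_upwards [hall] with ω hω
      congr 1
      funext q
      rw [hω q.1]
    have h3 : ∫ ω, ∑ m ∈ Finset.range (n * (c + 1)), Λ m * (V m ω - V (m + 1) ω) ∂μ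
        = ∑ m ∈ Finset.range (n * (c + 1)), ∫ ω, Λ m * (V m ω - V (m + 1) ω) ∂μ :=
      integral_finset_sum _ (fun m _ => (((hVintg m).sub (hVintg (m + 1))).const_mul (Λ m)))
    rw [h2, integral_congr_ae (Filter.Eventually.of_forall h1), h3]
    refine Finset.sum_congr rfl fun m _ => ?_
    rw [integral_const_mul, integral_sub (hVintg m) (hVintg (m + 1)), hVint m, hVint (m + 1)]
  -- Step 8: conclusion via Abel summation
  have habel := abel_aux Λ d hΛmono hd0 hdnn (n * (c + 1))
  have hsum_eq : ∑ m ∈ Finset.range (n * (c + 1)), Λ m * (d (m + 1) - d m)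
      = (∑ m ∈ Finset.range (n * (c + 1)), Λ m * (a m - a (m + 1)))
        - (1 - ε) * ∑ m ∈ Finset.range (n * (c + 1)), Λ m * (b m - b (m + 1)) := by
    rw [Finset.mul_sum, ← Finset.sum_sub_distrib]
    refine Finset.sum_congr rfl fun m _ => ?_
    rw [hd]
    dsimp only
    ring
  have hΛdN : 0 ≤ Λ (n * (c + 1)) * d (n * (c + 1)) := mul_nonneg (hΛnn _) (hdnn _)
  rw [hLHS, hRHS]
  have h1ε : (1 - 1 * ε) = (1 - ε) := by ring
  rw [h1ε]
  linarith [habel, hsum_eq, hΛdN]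
end
end
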